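/- arXiv:1504.04616 — 3 statements merged into one kernel-verified Lean document; each statement's English description precedes it below -/
import Mathlib

section
/- For all sufficiently large n, the number of balanced bipartite graphs G = (V_s, V_p, E) with V_s = V_p = Fin n whose readability satisfies r(G) ≤ n/(15·log₂ n) is at most 2^{2n²/3}. Consequently, since there are 2^{n²} such graphs in total, the fraction of balanced bipartite graphs on parts of size n with readability at least n/(15·log₂ n) tends to 1 as n → ∞ (almost all such graphs have readability Ω(n/log n)). -/
namespace Readability

/-- `x` overlaps `y` by `i`: `1 ≤ i ≤ min |x| |y|` and the length-`i` suffix of `x`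
equals the length-`i` prefix of `y`. -/
def OverlapsBy {α : Type*} (x y : List α) (i : ℕ) : Prop :=
  1 ≤ i ∧ i ≤ min x.length y.length ∧ x.drop (x.length - i) = y.take i

/-- `ov x y`: the minimum `i` such that `x` overlaps `y` by `i`, or `0` if none exists. -/
noncomputable def ov {α : Type*} (x y : List α) : ℕ := sInf {i | OverlapsBy x y i}

/-- An overlap labeling of length `r` of the bipartite graph with parts `Vs`, `Vp` and
edge relation `E ⊆ Vs × Vp`. -/
def IsOverlapLabeling {α Vs Vp : Type*} (E : Vs → Vp → Prop) (r : ℕ)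
    (ls : Vs → List α) (lp : Vp → List α) : Prop :=
  (∀ u, (ls u).length = r) ∧ (∀ v, (lp v).length = r) ∧
    ∀ u v, E u v ↔ ∃ i, OverlapsBy (ls u) (lp v) i

/-- Bipartite readability: the least `r` admitting an overlap labeling of length `r`
(over the alphabet `ℕ`). -/
noncomputable def bReadability {Vs Vp : Type*} (E : Vs → Vp → Prop) : ℕ :=
  sInf {r | ∃ (ls : Vs → List ℕ) (lp : Vp → List ℕ), IsOverlapLabeling E r ls lp}

/-- An injective overlap labeling of length `r` of the digraph with arc relation `A`. -/
def IsInjOverlapLabeling {V : Type*} (A : V → V → Prop) (r : ℕ) (ℓ : V → List ℕ) : Prop :=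
  (∀ v, (ℓ v).length = r) ∧ Function.Injective ℓ ∧
    ∀ u v, A u v ↔ 0 < ov (ℓ u) (ℓ v) ∧ ov (ℓ u) (ℓ v) < r

/-- Digraph readability: the least `r` admitting an injective overlap labeling of length `r`. -/
noncomputable def dReadability {V : Type*} (A : V → V → Prop) : ℕ :=
  sInf {r | ∃ ℓ : V → List ℕ, IsInjOverlapLabeling A r ℓ}

/-- A decomposition of size `k`: a weight function on edges with values in `{1,…,k}`. -/
def IsDecomposition {Vs Vp : Type*} (E : Vs → Vp → Prop) (k : ℕ) (w : Vs → Vp → ℕ) : Prop :=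
  ∀ u v, E u v → 1 ≤ w u v ∧ w u v ≤ k

/-- An induced `P₄` with consecutive edges `(s1,p1), (s2,p1), (s2,p2)`. -/
def InducedP4 {Vs Vp : Type*} (E : Vs → Vp → Prop) (s1 s2 : Vs) (p1 p2 : Vp) : Prop :=
  s1 ≠ s2 ∧ p1 ≠ p2 ∧ E s1 p1 ∧ E s2 p1 ∧ E s2 p2 ∧ ¬ E s1 p2

/-- The `P₄`-rule: on each induced `P₄`, if the middle edge has maximum weight then its weight
is at least the sum of the weights of the two outer edges. -/
def SatisfiesP4Rule {Vs Vp : Type*} (E : Vs → Vp → Prop) (w : Vs → Vp → ℕ) : Prop :=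
  ∀ s1 s2 p1 p2, InducedP4 E s1 s2 p1 p2 →
    w s2 p1 = max (w s1 p1) (max (w s2 p1) (w s2 p2)) →
    w s1 p1 + w s2 p2 ≤ w s2 p1

/-- The strict `P₄`-rule: as the `P₄`-rule, with strict inequality. -/
def SatisfiesStrictP4Rule {Vs Vp : Type*} (E : Vs → Vp → Prop) (w : Vs → Vp → ℕ) : Prop :=
  ∀ s1 s2 p1 p2, InducedP4 E s1 s2 p1 p2 →
    w s2 p1 = max (w s1 p1) (max (w s2 p1) (w s2 p2)) →
    w s1 p1 + w s2 p2 < w s2 p1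

/-- `C₄`-freeness of a bipartite graph. -/
def C4Free {Vs Vp : Type*} (E : Vs → Vp → Prop) : Prop :=
  ∀ (s1 s2 : Vs) (p1 p2 : Vp), s1 ≠ s2 → p1 ≠ p2 →
    ¬ (E s1 p1 ∧ E s1 p2 ∧ E s2 p1 ∧ E s2 p2)

/-- The subgraph `G_i` of a decomposition: edges of weight exactly `i`. -/
def SubAt {Vs Vp : Type*} (E : Vs → Vp → Prop) (w : Vs → Vp → ℕ) (i : ℕ) :
    Vs → Vp → Prop :=
  fun u v => E u v ∧ w u v = i

/-- A bipartite edge relation is a disjoint union of bicliques iff it has no induced `P₄`,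
i.e. whenever `(s1,p1), (s2,p1), (s2,p2)` are edges, so is `(s1,p2)`. -/
def BicliqueUnion {Vs Vp : Type*} (H : Vs → Vp → Prop) : Prop :=
  ∀ s1 s2 p1 p2, H s1 p1 → H s2 p1 → H s2 p2 → H s1 p2

/-- The HUB-rule for a decomposition `w`:
(i) every level graph `G_i` is a disjoint union of bicliques, and
(ii) non-isolated twins in `G_i` (for `i ≥ 2`) are twins in every `G_j` with `1 ≤ j ≤ i-1`
(stated for both parts of the bipartition). -/
def SatisfiesHUBRule {Vs Vp : Type*} (E : Vs → Vp → Prop) (w : Vs → Vp → ℕ) : Prop :=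
  (∀ i, 1 ≤ i → BicliqueUnion (SubAt E w i)) ∧
  (∀ i, 2 ≤ i → ∀ u v : Vs, u ≠ v → (∃ p, SubAt E w i u p) →
      (∀ p, SubAt E w i u p ↔ SubAt E w i v p) →
      ∀ j, 1 ≤ j → j ≤ i - 1 → ∀ p, SubAt E w j u p ↔ SubAt E w j v p) ∧
  (∀ i, 2 ≤ i → ∀ u v : Vp, u ≠ v → (∃ s, SubAt E w i s u) →
      (∀ s, SubAt E w i s u ↔ SubAt E w i s v) →
      ∀ j, 1 ≤ j → j ≤ i - 1 → ∀ s, SubAt E w j s u ↔ SubAt E w j s v)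

/-- The HUB number: minimum size of a decomposition satisfying the HUB-rule. -/
noncomputable def hubNumber {Vs Vp : Type*} (E : Vs → Vp → Prop) : ℕ :=
  sInf {k | ∃ w, IsDecomposition E k w ∧ SatisfiesHUBRule E w}

/-- The underlying undirected simple graph on `Vs ⊕ Vp` of a bipartite graph. -/
def underlyingGraph {Vs Vp : Type*} (E : Vs → Vp → Prop) : SimpleGraph (Vs ⊕ Vp) where
  Adj x y := (∃ u v, x = Sum.inl u ∧ y = Sum.inr v ∧ E u v) ∨
    (∃ u v, x = Sum.inr v ∧ y = Sum.inl u ∧ E u v)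
  symm := by
    constructor
    rintro x y (⟨u, v, rfl, rfl, h⟩ | ⟨u, v, rfl, rfl, h⟩)
    · exact Or.inr ⟨u, v, rfl, rfl, h⟩
    · exact Or.inl ⟨u, v, rfl, rfl, h⟩
  loopless := by
    constructor
    rintro x (⟨u, v, h1, h2, -⟩ | ⟨u, v, h1, h2, -⟩) <;> subst h1 <;> simp_all

/-- The radius of a graph: the least `r` such that some vertex has eccentricity at most `r`
(for a finite connected graph this is `min_u max_v dist(u,v)`). -/
noncomputable def graphRadius {V : Type*} (G : SimpleGraph V) : ℕ :=
  sInf {r | ∃ u, ∀ v, G.dist u v ≤ r}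

/-- Distinctness of two vertices `u, v` of the same part (here the `Vs`-part, with
neighborhoods taken in `Vp`): `max(|N(u)∖N(v)|, |N(v)∖N(u)|)`. -/
noncomputable def DTpair {Vs Vp : Type*} (E : Vs → Vp → Prop) (u v : Vs) : ℕ :=
  max {p : Vp | E u p ∧ ¬ E v p}.ncard {p : Vp | E v p ∧ ¬ E u p}.ncard

/-- Distinctness of a bipartite graph: the minimum of `DT(u,v)` over pairs of distinct
vertices in the same part. -/
noncomputable def distinctness {Vs Vp : Type*} (E : Vs → Vp → Prop) : ℕ :=
  sInf ({d | ∃ u v : Vs, u ≠ v ∧ d = DTpair E u v} ∪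
        {d | ∃ u v : Vp, u ≠ v ∧ d = DTpair (fun p s => E s p) u v})

/-- A bipartite graph fails to be a matching iff some vertex has degree at least 2. -/
def NotMatching {Vs Vp : Type*} (E : Vs → Vp → Prop) : Prop :=
  (∃ u : Vs, ∃ p1 p2 : Vp, p1 ≠ p2 ∧ E u p1 ∧ E u p2) ∨
  (∃ p : Vp, ∃ u1 u2 : Vs, u1 ≠ u2 ∧ E u1 p ∧ E u2 p)

section Statement12Aux

def gam (v : ℕ) : ℕ := 4 * v
def xi (u v : ℕ) : ℕ := 4 * (Nat.pair u v) + 1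
def rhoS (u : ℕ) : ℕ := 4 * u + 2
def rhoP (v : ℕ) : ℕ := 4 * v + 3

def T (f : ℕ → ℕ → Bool) (u v : ℕ) : List ℕ :=
  gam v :: ((List.range (u+1)).filter (fun u' => f u' v)).flatMap
    (fun u' => xi u' v ::
      (if h : ∃ w, w < v ∧ f u' w = true then
        T f u' (Nat.findGreatest (fun w => f u' w = true) (v - 1))
      else []))
termination_by v
decreasing_by
  · obtain ⟨w, hw, -⟩ := h
    exact lt_of_le_of_lt (Nat.findGreatest_le _) (by omega)

def TP (f : ℕ → ℕ → Bool) (u' v : ℕ) : List ℕ :=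
  if h : ∃ w, w < v ∧ f u' w = true then
    T f u' (Nat.findGreatest (fun w => f u' w = true) (v - 1))
  else []

def users (f : ℕ → ℕ → Bool) (u v : ℕ) : List ℕ :=
  (List.range (u+1)).filter (fun u' => f u' v)

def blkf (f : ℕ → ℕ → Bool) (v : ℕ) : ℕ → List ℕ := fun u' => xi u' v :: TP f u' v

theorem T_eq (f : ℕ → ℕ → Bool) (u v : ℕ) :
    T f u v = gam v :: (users f u v).flatMap (blkf f v) := by
  rw [T]; rfl

theorem mem_users {f u' u v} (h : u' ∈ users f u v) : u' ≤ u ∧ f u' v = true := by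
  unfold users at h
  simp only [List.mem_filter, List.mem_range] at h
  exact ⟨by omega, h.2⟩

theorem users_concat {f u v} (h : f u v = true) :
    users f u v = ((List.range u).filter (fun u' => f u' v)) ++ [u] := by
  unfold users
  rw [List.range_succ, List.filter_append]
  simp [h]

theorem users_mono (f) {u u₂ : ℕ} (v) (h : u ≤ u₂) :
    ∃ L₂, users f u₂ v = users f u v ++ L₂ := by
  induction u₂, h using Nat.le_induction with
  | base => exact ⟨[], by simp⟩
  | succ m hm IH =>
    obtain ⟨L₂, hL₂⟩ := IH
    refine ⟨L₂ ++ (if f (m+1) v then [m+1] else []), ?_⟩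
    unfold users at *
    rw [List.range_succ (n := m+1), List.filter_append, hL₂]
    by_cases hfm : f (m+1) v = true <;> simp [hfm, List.append_assoc]

theorem T_prefix (f) {u u₂ : ℕ} (v) (h : u ≤ u₂) :
    ∃ L₂ : List ℕ, T f u₂ v = T f u v ++ L₂.flatMap (blkf f v) := by
  obtain ⟨L₂, hL₂⟩ := users_mono f v h
  refine ⟨L₂, ?_⟩
  rw [T_eq, T_eq, hL₂, List.flatMap_append]
  simp

theorem flatMap_head (f v) (L : List ℕ) :
    L.flatMap (blkf f v) = [] ∨ ∃ a t, L.flatMap (blkf f v) = xi a v :: t := by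
  cases L with
  | nil => exact Or.inl rfl
  | cons a L => exact Or.inr ⟨a, TP f a v ++ L.flatMap (blkf f v), by simp [blkf]⟩

theorem blk_suffix_T {f u v} (h : f u v = true) : (xi u v :: TP f u v) <:+ T f u v := by
  rw [T_eq, users_concat h, List.flatMap_append]
  refine ⟨gam v :: ((List.range u).filter (fun u' => f u' v)).flatMap (blkf f v), ?_⟩
  simp [blkf]

theorem T_suffix_T {f} : ∀ {v v' u}, f u v' = true → f u v = true → v' ≤ v →
    T f u v' <:+ T f u v := by
  intro v
  induction v using Nat.strong_induction_on with
  | _ v IH =>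
    intro v' u h' h hle
    rcases eq_or_lt_of_le hle with rfl | hlt
    · exact List.suffix_rfl
    · have hex : ∃ w, w < v ∧ f u w = true := ⟨v', hlt, h'⟩
      set w := Nat.findGreatest (fun x => f u x = true) (v - 1) with hwdef
      have hfw : f u w = true :=
        Nat.findGreatest_spec (P := fun x => f u x = true) (show v' ≤ v - 1 by omega) h'
      have hwlt : w < v := lt_of_le_of_lt (Nat.findGreatest_le _) (by omega)
      have h1 : T f u v' <:+ T f u w := IH w hwlt h' hfw (Nat.le_findGreatest (by omega) h')
      have h2 : TP f u v = T f u w := by rw [TP, dif_pos hex]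
      have h3 : TP f u v <:+ T f u v := (List.suffix_cons (xi u v) (TP f u v)).trans (blk_suffix_T h)
      rw [h2] at h3
      exact h1.trans h3

theorem suffix_append_split {α : Type*} {s X Y : List α} (h : s <:+ X ++ Y) :
    s <:+ Y ∨ ∃ s', s' ≠ [] ∧ s = s' ++ Y ∧ s' <:+ X := by
  obtain ⟨p, hp⟩ := h
  rcases List.append_eq_append_iff.1 hp with ⟨a', ha1, ha2⟩ | ⟨c', hc1, hc2⟩
  · rcases eq_or_ne a' [] with rfl | hne
    · simp only [List.nil_append] at ha2
      exact Or.inl (ha2 ▸ List.suffix_rfl)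
    · exact Or.inr ⟨a', hne, ha2, ⟨p, ha1.symm⟩⟩
  · exact Or.inl ⟨c', hc2.symm⟩

theorem suffix_flatMap {α β : Type*} (g : α → List β) :
    ∀ (L : List α) {s}, s <:+ L.flatMap g → s ≠ [] →
    ∃ L₁ a L₂ s', L = L₁ ++ a :: L₂ ∧ s = s' ++ L₂.flatMap g ∧ s' <:+ g a ∧ s' ≠ [] := by
  intro L
  induction L with
  | nil => intro s h hne; rw [List.flatMap_nil, List.suffix_nil] at h; exact absurd h hne
  | cons a L IH =>
    intro s h hne
    rw [List.flatMap_cons] at h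
    rcases suffix_append_split h with h1 | ⟨s', hs'ne, rfl, hs'⟩
    · obtain ⟨L₁, b, L₂, s', hL, hs, h3, h4⟩ := IH h1 hne
      exact ⟨a :: L₁, b, L₂, s', by rw [hL]; rfl, hs, h3, h4⟩
    · exact ⟨[], a, L, s', rfl, rfl, hs', hs'ne⟩

theorem main_lemma (f : ℕ → ℕ → Bool) (n : ℕ) :
    ∀ v₀ u s v, u < n → f u v₀ = true → s ≠ [] →
    s <:+ T f u v₀ → s <+: T f (n-1) v → f u v = true ∧ s = T f u v ∧ v ≤ v₀ := by
  intro v₀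
  induction v₀ using Nat.strong_induction_on with
  | _ v₀ IH =>
    intro u s v hun hfu hs hsuf hpre
    have hhead : s.head? = some (gam v) := by
      obtain ⟨t, ht⟩ := hpre
      have h1 : (s ++ t).head? = some (gam v) := by rw [ht, T_eq]; rfl
      rw [List.head?_append] at h1
      cases s with
      | nil => exact absurd rfl hs
      | cons x s => simpa using h1
    rw [T_eq] at hsuf
    rcases List.suffix_cons_iff.1 hsuf with hwhole | htail
    · have hgg : gam v = gam v₀ := by
        rw [hwhole] at hhead; simpa using hhead.symm
      have hv : v = v₀ := by unfold gam at hgg; omega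
      subst hv
      exact ⟨hfu, by rw [hwhole, T_eq], le_refl _⟩
    · obtain ⟨L₁, a, L₂, s', hL, hsdec, hs'suf, hs'ne⟩ := suffix_flatMap (blkf f v₀) _ htail hs
      have haL : a ∈ users f u v₀ := by rw [hL]; simp
      obtain ⟨hau, hfav₀⟩ := mem_users haL
      rcases List.suffix_cons_iff.1 hs'suf with h1 | h2
      · exfalso
        have hx : s.head? = some (xi a v₀) := by rw [hsdec, h1]; simp [blkf]
        rw [hhead] at hx
        have : gam v = xi a v₀ := by simpa using hx
        unfold gam xi at this; omega
      · by_cases hex : ∃ w, w < v₀ ∧ f a w = true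
        case neg =>
          exfalso
          rw [show TP f a v₀ = [] from by rw [TP, dif_neg hex], List.suffix_nil] at h2
          exact hs'ne h2
        case pos =>
          set w := Nat.findGreatest (fun x => f a x = true) (v₀ - 1) with hwdef
          rw [show TP f a v₀ = T f a w from by rw [TP, dif_pos hex]] at h2
          obtain ⟨w₀, hw₀v, hfaw₀⟩ := hex
          have hfaw : f a w = true :=
            Nat.findGreatest_spec (P := fun x => f a x = true) (show w₀ ≤ v₀ - 1 by omega) hfaw₀
          have hwv₀ : w < v₀ := lt_of_le_of_lt (Nat.findGreatest_le _) (by omega)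
          have hs'pre : s' <+: T f (n-1) v :=
            (List.prefix_append s' _).trans (hsdec ▸ hpre)
          obtain ⟨hfav, hs'eq, hvw⟩ :=
            IH w hwv₀ a s' v (lt_of_le_of_lt hau hun) hfaw hs'ne h2 hs'pre
          cases L₂ with
          | nil =>
            have hau' : a = u := by
              have h5 : ((List.range u).filter (fun u' => f u' v₀)) ++ [u] = L₁ ++ [a] := by
                rw [← users_concat hfu, hL]
              have h6 := List.getLast?_concat (a := u) (l := (List.range u).filter (fun u' => f u' v₀))
              rw [h5, List.getLast?_concat] at h6
              exact Option.some_inj.1 h6.symm |>.symm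
            subst hau'
            refine ⟨hfav, ?_, le_trans hvw (le_of_lt hwv₀)⟩
            rw [hsdec]; simpa using hs'eq
          | cons b L₂' =>
            exfalso
            obtain ⟨L₃, hT⟩ := T_prefix f (u := a) (u₂ := n-1) v (by omega)
            have hseq2 : s = T f a v ++ (b :: L₂').flatMap (blkf f v₀) := by
              rw [hsdec, hs'eq]
            have hpre2 : T f a v ++ (b :: L₂').flatMap (blkf f v₀) <+:
                T f a v ++ L₃.flatMap (blkf f v) := by
              rw [← hT, ← hseq2]; exact hpre
            have hpre3 := (List.prefix_append_right_inj _).1 hpre2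
            rcases flatMap_head f v L₃ with hnil | ⟨c, t, hQ⟩
            · rw [hnil, List.prefix_nil] at hpre3
              simp [blkf] at hpre3
            · rw [hQ] at hpre3
              have hbc : xi b v₀ = xi c v := by
                obtain ⟨q, hq⟩ := hpre3
                have h7 : ((b :: L₂').flatMap (blkf f v₀) ++ q).head? = some (xi c v) := by
                  rw [hq]; rfl
                rw [List.head?_append] at h7
                have h8 : ((b :: L₂').flatMap (blkf f v₀)).head? = some (xi b v₀) := by
                  simp [blkf]
                rw [h8] at h7
                simpa using h7
              unfold xi at hbc
              have : Nat.pair b v₀ = Nat.pair c v := by omega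
              have := (Nat.pair_eq_pair.1 this).2
              omega

theorem mem_T_mod (f : ℕ → ℕ → Bool) :
    ∀ v u x, x ∈ T f u v → x % 4 = 0 ∨ x % 4 = 1 := by
  intro v
  induction v using Nat.strong_induction_on with
  | _ v IH =>
    intro u x hx
    rw [T_eq] at hx
    rcases List.mem_cons.1 hx with rfl | hx
    · left; unfold gam; omega
    · obtain ⟨a, ha, hxa⟩ := List.mem_flatMap.1 hx
      rcases List.mem_cons.1 hxa with rfl | hx2
      · right; unfold xi; omega
      · by_cases hex : ∃ w, w < v ∧ f a w = true
        · rw [show TP f a v = T f a (Nat.findGreatest (fun w => f a w = true) (v-1)) from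
            by rw [TP, dif_pos hex]] at hx2
          obtain ⟨w₀, hw₀, -⟩ := hex
          exact IH _ (lt_of_le_of_lt (Nat.findGreatest_le _) (by omega)) a x hx2
        · rw [show TP f a v = [] from by rw [TP, dif_neg hex]] at hx2
          exact absurd hx2 List.not_mem_nil

theorem mem_TP_mod (f : ℕ → ℕ → Bool) {v u x} (hx : x ∈ TP f u v) :
    x % 4 = 0 ∨ x % 4 = 1 := by
  by_cases hex : ∃ w, w < v ∧ f u w = true
  · rw [TP, dif_pos hex] at hx
    exact mem_T_mod f _ _ _ hx
  · rw [TP, dif_neg hex] at hx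
    exact absurd hx List.not_mem_nil

theorem T_suffix_TP {f : ℕ → ℕ → Bool} {u v n : ℕ} (h : f u v = true) (hv : v < n) :
    T f u v <:+ TP f u n := by
  have hex : ∃ w, w < n ∧ f u w = true := ⟨v, hv, h⟩
  rw [TP, dif_pos hex]
  have hm : f u (Nat.findGreatest (fun w => f u w = true) (n-1)) = true :=
    Nat.findGreatest_spec (P := fun w => f u w = true) (show v ≤ n - 1 by omega) h
  exact T_suffix_T h hm (Nat.le_findGreatest (by omega) h)

def rlen (f : ℕ → ℕ → Bool) (n : ℕ) : ℕ :=
  (∑ u ∈ Finset.range n, (TP f u n).length) + (∑ v ∈ Finset.range n, (T f (n-1) v).length)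

theorem TP_len_le {f n u} (hu : u < n) : (TP f u n).length ≤ rlen f n := by
  unfold rlen
  have h2 : (TP f u n).length ≤ ∑ u ∈ Finset.range n, (TP f u n).length := by
    simpa using Finset.single_le_sum (f := fun u => (TP f u n).length)
      (fun i _ => Nat.zero_le _) (Finset.mem_range.2 hu)
  omega

theorem T_len_le {f n v} (hv : v < n) : (T f (n-1) v).length ≤ rlen f n := by
  unfold rlen
  have h2 : (T f (n-1) v).length ≤ ∑ v ∈ Finset.range n, (T f (n-1) v).length := by
    simpa using Finset.single_le_sum (f := fun v => (T f (n-1) v).length)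
      (fun i _ => Nat.zero_le _) (Finset.mem_range.2 hv)
  omega

def Sstr (f : ℕ → ℕ → Bool) (n u : ℕ) : List ℕ :=
  List.replicate (rlen f n - (TP f u n).length) (rhoS u) ++ TP f u n

def Pstr (f : ℕ → ℕ → Bool) (n v : ℕ) : List ℕ :=
  T f (n-1) v ++ List.replicate (rlen f n - (T f (n-1) v).length) (rhoP v)

theorem Sstr_len {f n u} (hu : u < n) : (Sstr f n u).length = rlen f n := by
  have := TP_len_le (f := f) hu
  simp only [Sstr, List.length_append, List.length_replicate]
  omega

theorem Pstr_len {f n v} (hv : v < n) : (Pstr f n v).length = rlen f n := by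
  have := T_len_le (f := f) hv
  simp only [Pstr, List.length_append, List.length_replicate]
  omega

theorem overlap_iff (f : ℕ → ℕ → Bool) (n : ℕ)
    (hcl : ∀ a b, f a b = true → a < n ∧ b < n)
    {u v : ℕ} (hu : u < n) (hv : v < n) :
    (∃ i, OverlapsBy (Sstr f n u) (Pstr f n v) i) ↔ f u v = true := by
  constructor
  · rintro ⟨i, hi1, hi2, heq⟩
    rw [Sstr_len hu, Pstr_len hv, min_self] at hi2
    rw [Sstr_len hu] at heq
    set s := (Sstr f n u).drop (rlen f n - i) with hsdef
    have hslen : s.length = i := by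
      rw [hsdef, List.length_drop, Sstr_len hu]; omega
    have hsne : s ≠ [] := by
      intro hnil; rw [hnil] at hslen; simp at hslen; omega
    have hssuf : s <:+ Sstr f n u := List.drop_suffix _ _
    have hspre : s <+: Pstr f n v := heq ▸ List.take_prefix _ _
    -- step 1 : i ≤ length of W
    have hiW : i ≤ (T f (n-1) v).length := by
      by_contra hgt
      push_neg at hgt
      have hmem : rhoP v ∈ s := by
        rw [heq, Pstr, List.take_append]
        refine List.mem_append.2 (Or.inr ?_)
        rw [List.take_replicate]
        refine List.mem_replicate.2 ⟨?_, rfl⟩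
        have := T_len_le (f := f) hv
        omega
      have hmem2 : rhoP v ∈ Sstr f n u := hssuf.mem hmem
      rcases List.mem_append.1 hmem2 with h1 | h2
      · have := List.eq_of_mem_replicate h1
        unfold rhoP rhoS at this; omega
      · rcases mem_TP_mod f h2 with h3 | h3 <;> (unfold rhoP at h3; omega)
    -- step 2 : i ≤ length of D
    have hiD : i ≤ (TP f u n).length := by
      by_contra hgt
      push_neg at hgt
      have hmem : rhoS u ∈ s := by
        rw [hsdef, Sstr, List.drop_append]
        refine List.mem_append.2 (Or.inl ?_)
        rw [List.drop_replicate]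
        refine List.mem_replicate.2 ⟨?_, rfl⟩
        have := TP_len_le (f := f) hu
        omega
      have hmem2 : rhoS u ∈ Pstr f n v := hspre.mem hmem
      rcases List.mem_append.1 hmem2 with h1 | h2
      · rcases mem_T_mod f _ _ _ h1 with h3 | h3 <;> (unfold rhoS at h3; omega)
      · have := List.eq_of_mem_replicate h2
        unfold rhoS rhoP at this; omega
    -- s is a suffix of TP f u n
    have hsuf2 : s <:+ TP f u n := by
      rw [hsdef, Sstr, List.drop_append, List.drop_replicate,
        List.length_replicate]
      have := TP_len_le (f := f) hu
      rw [show rlen f n - i - (rlen f n - (TP f u n).length) =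
        (TP f u n).length - i from by omega]
      rw [show rlen f n - (TP f u n).length - (rlen f n - i) = 0 from by omega]
      simp only [List.replicate_zero, List.nil_append]
      exact List.drop_suffix _ _
    -- s is a prefix of T f (n-1) v
    have hpre2 : s <+: T f (n-1) v := by
      rw [heq, Pstr, List.take_append]
      rw [show i - (T f (n-1) v).length = 0 from by omega]
      simp only [List.take_zero, List.append_nil]
      exact List.take_prefix _ _
    -- TP is nonempty, so the dite fired
    by_cases hex : ∃ w, w < n ∧ f u w = true
    · rw [show TP f u n = T f u (Nat.findGreatest (fun w => f u w = true) (n-1)) from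
        by rw [TP, dif_pos hex]] at hsuf2
      obtain ⟨w₀, hw₀, hfw₀⟩ := hex
      have hm : f u (Nat.findGreatest (fun w => f u w = true) (n-1)) = true :=
        Nat.findGreatest_spec (P := fun w => f u w = true) (show w₀ ≤ n - 1 by omega) hfw₀
      exact (main_lemma f n _ u s v hu hm hsne hsuf2 hpre2).1
    · exfalso
      rw [show TP f u n = [] from by rw [TP, dif_neg hex], List.suffix_nil] at hsuf2
      exact hsne hsuf2
  · intro h
    refine ⟨(T f u v).length, ?_, ?_, ?_⟩
    · simp [T_eq]
    · rw [Sstr_len hu, Pstr_len hv, min_self]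
      exact le_trans (T_suffix_TP h hv).length_le (TP_len_le hu)
    · rw [Sstr_len hu]
      obtain ⟨q, hq⟩ := T_suffix_TP (n := n) h hv
      obtain ⟨L₃, hT⟩ := T_prefix f (u := u) (u₂ := n-1) v (by omega)
      have h1 : Sstr f n u =
          (List.replicate (rlen f n - (TP f u n).length) (rhoS u) ++ q) ++ T f u v := by
        rw [Sstr, ← hq, List.append_assoc]
      have hlen1 : (List.replicate (rlen f n - (TP f u n).length) (rhoS u) ++ q).length =
          rlen f n - (T f u v).length := by
        have h2 : q.length + (T f u v).length = (TP f u n).length := by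
          rw [← hq]; simp
        have := TP_len_le (f := f) hu
        simp only [List.length_append, List.length_replicate]
        omega
      rw [h1, List.drop_left' hlen1]
      rw [Pstr, hT, List.append_assoc, List.take_left' rfl]

theorem exists_labeling {n : ℕ} (E : Fin n → Fin n → Bool) :
    ∃ (r : ℕ) (ls lp : Fin n → List ℕ),
      IsOverlapLabeling (fun u v => E u v = true) r ls lp := by
  rcases Nat.eq_zero_or_pos n with rfl | hn
  · exact ⟨0, fun u => [], fun v => [],
      fun u => u.elim0, fun v => v.elim0, fun u => u.elim0⟩
  · set f : ℕ → ℕ → Bool := fun a b =>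
      if ha : a < n then if hb : b < n then E ⟨a, ha⟩ ⟨b, hb⟩ else false else false with hf
    have hcl : ∀ a b, f a b = true → a < n ∧ b < n := by
      intro a b hab
      rw [hf] at hab
      by_cases ha : a < n
      · by_cases hb : b < n
        · exact ⟨ha, hb⟩
        · simp [ha, hb] at hab
      · simp [ha] at hab
    refine ⟨rlen f n, fun u => Sstr f n u, fun v => Pstr f n v,
      fun u => Sstr_len u.isLt, fun v => Pstr_len v.isLt, ?_⟩
    intro u v
    show E u v = true ↔ ∃ i, OverlapsBy (Sstr f n u) (Pstr f n v) i
    have hfeq : f (u:ℕ) (v:ℕ) = E u v := by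
      rw [hf]; simp [u.isLt, v.isLt]
    rw [← hfeq]
    exact (overlap_iff f n hcl u.isLt v.isLt).symm

-- map invariance
theorem map_eq_map_cancel {α β : Type*} (g : α → β) :
    ∀ (x y : List α), (∀ a ∈ x, ∀ b ∈ y, g a = g b → a = b) →
      x.map g = y.map g → x = y := by
  intro x
  induction x with
  | nil =>
    intro y _ h
    cases y with
    | nil => rfl
    | cons b y => simp at h
  | cons a x IH =>
    intro y hinj h
    cases y with
    | nil => simp at h
    | cons b y =>
      simp only [List.map_cons, List.cons.injEq] at h
      have hab : a = b := hinj a (by simp) b (by simp) h.1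
      subst hab
      have := IH y (fun c hc d hd => hinj c (by simp [hc]) d (by simp [hd])) h.2
      rw [this]

theorem overlapsBy_map {α β : Type*} (g : α → β) {x y : List α}
    (hinj : ∀ a ∈ x, ∀ b ∈ y, g a = g b → a = b) (i : ℕ) :
    OverlapsBy (x.map g) (y.map g) i ↔ OverlapsBy x y i := by
  unfold OverlapsBy
  simp only [List.length_map]
  constructor
  · rintro ⟨h1, h2, h3⟩
    refine ⟨h1, h2, ?_⟩
    rw [← List.map_drop, ← List.map_take] at h3
    exact map_eq_map_cancel g _ _
      (fun a ha b hb => hinj a ((List.drop_suffix _ _).mem ha)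
        b ((List.take_prefix _ _).mem hb)) h3
  · rintro ⟨h1, h2, h3⟩
    exact ⟨h1, h2, by rw [← List.map_drop, ← List.map_take, h3]⟩

theorem exists_bounded_labeling {n r : ℕ} {E : Fin n → Fin n → Bool}
    (h : ∃ (ls lp : Fin n → List ℕ),
      IsOverlapLabeling (fun u v => E u v = true) r ls lp) :
    ∃ (ls lp : Fin n → List ℕ),
      IsOverlapLabeling (fun u v => E u v = true) r ls lp ∧
      (∀ u, ∀ x ∈ ls u, x < 2*n*r + 1) ∧ (∀ v, ∀ x ∈ lp v, x < 2*n*r + 1) := by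
  obtain ⟨ls, lp, hlen1, hlen2, hiff⟩ := h
  set all : List ℕ := (List.finRange n).flatMap ls ++ (List.finRange n).flatMap lp with hall
  have hmem1 : ∀ u, ∀ x ∈ ls u, x ∈ all := by
    intro u x hx
    exact List.mem_append.2 (Or.inl (List.mem_flatMap.2 ⟨u, List.mem_finRange u, hx⟩))
  have hmem2 : ∀ v, ∀ x ∈ lp v, x ∈ all := by
    intro v x hx
    exact List.mem_append.2 (Or.inr (List.mem_flatMap.2 ⟨v, List.mem_finRange v, hx⟩))
  have halllen : all.length ≤ 2*n*r := by
    rw [hall, List.length_append, List.length_flatMap, List.length_flatMap]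
    have e1 : ((List.finRange n).map (List.length ∘ ls)).sum = n * r := by
      have : (List.finRange n).map (List.length ∘ ls) = List.replicate n r := by
        rw [List.eq_replicate_iff]
        constructor
        · simp
        · intro b hb
          obtain ⟨u, -, rfl⟩ := List.mem_map.1 hb
          exact hlen1 u
      rw [this, List.sum_replicate, smul_eq_mul]
    have e2 : ((List.finRange n).map (List.length ∘ lp)).sum = n * r := by
      have : (List.finRange n).map (List.length ∘ lp) = List.replicate n r := by
        rw [List.eq_replicate_iff]
        constructor
        · simp
        · intro b hb
          obtain ⟨v, -, rfl⟩ := List.mem_map.1 hb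
          exact hlen2 v
      rw [this, List.sum_replicate, smul_eq_mul]
    simp only [Function.comp_def] at e1 e2
    rw [e1, e2]
    have : n * r + n * r = 2 * n * r := by ring
    omega
  set g : ℕ → ℕ := fun a => all.idxOf a with hg
  have hginj : ∀ a ∈ all, ∀ b ∈ all, g a = g b → a = b := by
    intro a ha b hb hab
    have h1 : all[all.idxOf a]'(List.idxOf_lt_length_iff.2 ha) = a := List.getElem_idxOf _
    have h2 : all[all.idxOf b]'(List.idxOf_lt_length_iff.2 hb) = b := List.getElem_idxOf _
    rw [← h1, ← h2]
    simp only [hg] at hab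
    congr 1
  have hgbd : ∀ a ∈ all, g a < 2*n*r + 1 := by
    intro a ha
    simp only [hg]
    have h1 := List.idxOf_lt_length_iff.2 ha
    omega
  refine ⟨fun u => (ls u).map g, fun v => (lp v).map g, ⟨?_, ?_, ?_⟩, ?_, ?_⟩
  · intro u; rw [List.length_map]; exact hlen1 u
  · intro v; rw [List.length_map]; exact hlen2 v
  · intro u v
    rw [hiff u v]
    constructor
    · rintro ⟨i, hi⟩
      exact ⟨i, (overlapsBy_map g
        (fun a ha b hb => hginj a (hmem1 u a ha) b (hmem2 v b hb)) i).2 hi⟩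
    · rintro ⟨i, hi⟩
      exact ⟨i, (overlapsBy_map g
        (fun a ha b hb => hginj a (hmem1 u a ha) b (hmem2 v b hb)) i).1 hi⟩
  · intro u x hx
    obtain ⟨a, ha, rfl⟩ := List.mem_map.1 hx
    exact hgbd a (hmem1 u a ha)
  · intro v x hx
    obtain ⟨a, ha, rfl⟩ := List.mem_map.1 hx
    exact hgbd a (hmem2 v a ha)

theorem card_bound (n r₀ : ℕ) :
    Nat.card {E : Fin n → Fin n → Bool //
        bReadability (fun u v => E u v = true) ≤ r₀}
      ≤ (r₀ + 1) * ((2*n*r₀+1) ^ (r₀+1)) ^ n * ((2*n*r₀+1) ^ (r₀+1)) ^ n := by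
  classical
  set B := 2*n*r₀+1 with hB
  set C := Fin (r₀+1) × (Fin n → Fin (r₀+1) → Fin B) × (Fin n → Fin (r₀+1) → Fin B) with hC
  have hcard : Nat.card C = (r₀ + 1) * (B ^ (r₀+1)) ^ n * (B ^ (r₀+1)) ^ n := by
    rw [Nat.card_eq_fintype_card]
    simp [hC, mul_assoc]
  rw [← hcard]
  -- build injection
  have hchoice : ∀ E : {E : Fin n → Fin n → Bool //
      bReadability (fun u v => E u v = true) ≤ r₀},
      ∃ (r : ℕ) (ls lp : Fin n → List ℕ),
        r ≤ r₀ ∧ IsOverlapLabeling (fun u v => (E : Fin n → Fin n → Bool) u v = true) r ls lp ∧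
        (∀ u, ∀ x ∈ ls u, x < B) ∧ (∀ v, ∀ x ∈ lp v, x < B) := by
    rintro ⟨E, hE⟩
    set S := {r | ∃ (ls lp : Fin n → List ℕ),
      IsOverlapLabeling (fun u v => E u v = true) r ls lp} with hS
    have hne : S.Nonempty := by
      obtain ⟨r, ls, lp, h⟩ := exists_labeling E
      exact ⟨r, ls, lp, h⟩
    have hmem : bReadability (fun u v => E u v = true) ∈ S := Nat.sInf_mem hne
    set r := bReadability (fun u v => E u v = true) with hr
    obtain ⟨ls, lp, hlab⟩ := hmem
    obtain ⟨ls', lp', hlab', hbd1, hbd2⟩ := exists_bounded_labeling ⟨ls, lp, hlab⟩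
    refine ⟨r, ls', lp', hE, hlab', ?_, ?_⟩
    · intro u x hx
      have := hbd1 u x hx
      have : x < 2*n*r + 1 := this
      have hrr : 2*n*r ≤ 2*n*r₀ := by
        have := hE
        calc 2*n*r = 2*n*r := rfl
        _ ≤ 2*n*r₀ := Nat.mul_le_mul_left _ hE
      omega
    · intro v x hx
      have := hbd2 v x hx
      have hrr : 2*n*r ≤ 2*n*r₀ := Nat.mul_le_mul_left _ hE
      omega
  choose cr cls clp hcr hclab hcbd1 hcbd2 using hchoice
  have hB0 : 0 < B := by omega
  have hgetD : ∀ (l : List ℕ), (∀ x ∈ l, x < B) → ∀ j : ℕ, l.getD j 0 < B := by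
    intro l hl j
    by_cases hj : j < l.length
    · rw [List.getD_eq_getElem l 0 hj]
      exact hl _ (List.getElem_mem hj)
    · rw [List.getD_eq_default l 0 (by omega)]
      exact hB0
  set Φ : {E : Fin n → Fin n → Bool //
      bReadability (fun u v => E u v = true) ≤ r₀} → C := fun E =>
    (⟨cr E, by have := hcr E; omega⟩,
     fun u j => ⟨(cls E u).getD (j : ℕ) 0, hgetD _ (hcbd1 E u) _⟩,
     fun v j => ⟨(clp E v).getD (j : ℕ) 0, hgetD _ (hcbd2 E v) _⟩) with hΦ
  have hinj : Function.Injective Φ := by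
    intro E₁ E₂ h
    have h0 : cr E₁ = cr E₂ := congrArg (fun c : C => (c.1 : ℕ)) h
    have h1 : ∀ u (j : Fin (r₀+1)), (cls E₁ u).getD (j : ℕ) 0 = (cls E₂ u).getD (j : ℕ) 0 :=
      fun u j => congrArg (fun c : C => (c.2.1 u j : ℕ)) h
    have h2 : ∀ v (j : Fin (r₀+1)), (clp E₁ v).getD (j : ℕ) 0 = (clp E₂ v).getD (j : ℕ) 0 :=
      fun v j => congrArg (fun c : C => (c.2.2 v j : ℕ)) h
    have hls : ∀ u, cls E₁ u = cls E₂ u := by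
      intro u
      have hl1 : (cls E₁ u).length = cr E₁ := (hclab E₁).1 u
      have hl2 : (cls E₂ u).length = cr E₂ := (hclab E₂).1 u
      apply List.ext_getElem (by omega)
      intro j hj1 hj2
      have hjr : j < r₀ + 1 := by have := hcr E₁; omega
      have hc := h1 u ⟨j, hjr⟩
      rwa [List.getD_eq_getElem _ 0 hj1, List.getD_eq_getElem _ 0 hj2] at hc
    have hlp : ∀ v, clp E₁ v = clp E₂ v := by
      intro v
      have hl1 : (clp E₁ v).length = cr E₁ := (hclab E₁).2.1 v
      have hl2 : (clp E₂ v).length = cr E₂ := (hclab E₂).2.1 v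
      apply List.ext_getElem (by omega)
      intro j hj1 hj2
      have hjr : j < r₀ + 1 := by have := hcr E₁; omega
      have hc := h2 v ⟨j, hjr⟩
      rwa [List.getD_eq_getElem _ 0 hj1, List.getD_eq_getElem _ 0 hj2] at hc
    apply Subtype.ext
    funext u v
    have hiff1 := (hclab E₁).2.2 u v
    have hiff2 := (hclab E₂).2.2 u v
    rw [hls u, hlp v] at hiff1
    simp only [] at hiff1 hiff2
    have hiff : ((E₁ : Fin n → Fin n → Bool) u v = true) ↔
        ((E₂ : Fin n → Fin n → Bool) u v = true) := hiff1.trans hiff2.symm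
    cases hx : (E₁ : Fin n → Fin n → Bool) u v <;>
      cases hy : (E₂ : Fin n → Fin n → Bool) u v <;>
      simp [hx, hy] at hiff ⊢
  exact Nat.card_le_card_of_injective Φ hinj



theorem logb_le_4sqrt (x : ℝ) (hx : 1 ≤ x) : Real.logb 2 x ≤ 4 * Real.sqrt x := by
  have hx0 : (0:ℝ) < x := by linarith
  have hs0 : 0 < Real.sqrt x := Real.sqrt_pos.2 hx0
  have h1 : Real.log x ≤ 2 * Real.sqrt x := by
    have h2 : Real.log (Real.sqrt x) = Real.log x / 2 := Real.log_sqrt (le_of_lt hx0)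
    have h3 : Real.log (Real.sqrt x) ≤ Real.sqrt x - 1 := Real.log_le_sub_one_of_pos hs0
    linarith
  have hlog2 : (0.6931471803 : ℝ) < Real.log 2 := Real.log_two_gt_d9
  have hlx : 0 ≤ Real.log x := Real.log_nonneg hx
  rw [Real.logb, div_le_iff₀ (by linarith : (0:ℝ) < Real.log 2)]
  nlinarith [hs0.le]

theorem nat_pow_eq_rpow (n k : ℕ) (hn : 1 ≤ n) :
    ((n:ℝ) ^ k) = (2:ℝ) ^ ((k:ℝ) * Real.logb 2 n) := by
  have hn0 : (0:ℝ) < n := by exact_mod_cast hn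
  have key : ∀ a : ℝ, ((2:ℝ) ^ a) ^ k = (2:ℝ) ^ ((k:ℝ) * a) := by
    intro a
    rw [← Real.rpow_natCast ((2:ℝ) ^ a) k, ← Real.rpow_mul (by norm_num)]
    ring_nf
  calc ((n:ℝ) ^ k) = ((2:ℝ) ^ (Real.logb 2 (n:ℝ))) ^ k := by
        rw [Real.rpow_logb (by norm_num) (by norm_num) hn0]
    _ = (2:ℝ) ^ ((k:ℝ) * Real.logb 2 (n:ℝ)) := key _

theorem main_real_bound (n r₀ : ℕ) (hn : 1000000 ≤ n)
    (hr : (r₀ : ℝ) ≤ (n:ℝ) / (15 * Real.logb 2 n)) :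
    (((r₀+1) * ((2*n*r₀+1)^(r₀+1))^n * ((2*n*r₀+1)^(r₀+1))^n : ℕ) : ℝ)
      ≤ (2:ℝ) ^ ((2:ℝ) * (n:ℝ)^2 / 3) := by
  set L := Real.logb 2 (n:ℝ) with hLdef
  have hn2 : (2:ℝ) ≤ (n:ℝ) := by
    have h : (2:ℕ) ≤ n := by omega
    exact_mod_cast h
  have hnR : (1000000:ℝ) ≤ (n:ℝ) := by exact_mod_cast hn
  have hL1 : 1 ≤ L := by
    rw [hLdef, Real.logb, le_div_iff₀ (Real.log_pos (by norm_num)), one_mul]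
    exact Real.log_le_log (by norm_num) hn2
  have hLpos : 0 < L := by linarith
  have hrL : (r₀:ℝ) * L ≤ (n:ℝ) / 15 := by
    have h2 : (r₀:ℝ) ≤ ((n:ℝ)/15) / L := by
      rw [div_div]; exact hr
    calc (r₀:ℝ) * L ≤ (((n:ℝ)/15)/L) * L := mul_le_mul_of_nonneg_right h2 hLpos.le
      _ = (n:ℝ)/15 := by field_simp
  have hr15 : (r₀:ℝ) ≤ (n:ℝ) / 15 := by
    calc (r₀:ℝ) = (r₀:ℝ) * 1 := by ring
      _ ≤ (r₀:ℝ) * L := mul_le_mul_of_nonneg_left hL1 (Nat.cast_nonneg r₀)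
      _ ≤ (n:ℝ)/15 := hrL
  have hsq : (1000:ℝ) ≤ Real.sqrt n := by
    rw [show (1000:ℝ) = Real.sqrt (1000^2) from (Real.sqrt_sq (by norm_num)).symm]
    exact Real.sqrt_le_sqrt (by norm_num; linarith)
  have hLn : L ≤ (2/25) * (n:ℝ) := by
    have h4 := logb_le_4sqrt (n:ℝ) (by linarith)
    have h5 : Real.sqrt n * Real.sqrt n = (n:ℝ) := Real.mul_self_sqrt (by linarith)
    rw [hLdef]
    nlinarith [Real.sqrt_nonneg (n:ℝ)]
  have hB : (2*(n:ℝ)*(r₀:ℝ)+1) ≤ (n:ℝ)^2 := by nlinarith [hr15, hnR]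
  have hr1 : ((r₀:ℝ) + 1) ≤ (n:ℝ) := by nlinarith [hr15, hnR]
  set k : ℕ := 2*(r₀+1)*n with hkdef
  have hstep1 : ((2*(n:ℝ)*(r₀:ℝ)+1)^(r₀+1))^n ≤ (n:ℝ)^k := by
    calc ((2*(n:ℝ)*(r₀:ℝ)+1)^(r₀+1))^n ≤ (((n:ℝ)^2)^(r₀+1))^n := by
          apply pow_le_pow_left₀ (by positivity)
          apply pow_le_pow_left₀ (by positivity) hB
      _ = (n:ℝ)^k := by rw [hkdef, ← pow_mul, ← pow_mul, Nat.mul_assoc]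
  push_cast
  have htotal : ((r₀:ℝ)+1) * ((2*(n:ℝ)*(r₀:ℝ)+1)^(r₀+1))^n * ((2*(n:ℝ)*(r₀:ℝ)+1)^(r₀+1))^n
      ≤ (n:ℝ) ^ (2*k+1) := by
    have e1 : (0:ℝ) ≤ ((2*(n:ℝ)*(r₀:ℝ)+1)^(r₀+1))^n := by positivity
    have h0n : (0:ℝ) ≤ (n:ℝ) := by linarith
    calc ((r₀:ℝ)+1) * ((2*(n:ℝ)*(r₀:ℝ)+1)^(r₀+1))^n * ((2*(n:ℝ)*(r₀:ℝ)+1)^(r₀+1))^n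
        ≤ (n:ℝ) * ((n:ℝ)^k) * ((n:ℝ)^k) := by
          apply mul_le_mul
          · exact mul_le_mul hr1 hstep1 e1 h0n
          · exact hstep1
          · exact e1
          · positivity
      _ = (n:ℝ) ^ (2*k+1) := by rw [pow_add, pow_mul]; ring
  refine le_trans htotal ?_
  rw [nat_pow_eq_rpow n (2*k+1) (by omega)]
  rw [Real.rpow_le_rpow_left_iff (by norm_num : (1:ℝ) < 2)]
  rw [hkdef]
  push_cast
  nlinarith [mul_le_mul_of_nonneg_left hrL (by linarith : (0:ℝ) ≤ 4*(n:ℝ)),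
    mul_le_mul_of_nonneg_left hLn (by linarith : (0:ℝ) ≤ 4*(n:ℝ)),
    hL1, hLpos.le, hnR, hLn]

theorem count_P_le (n : ℕ) (hn : 1000000 ≤ n) :
    (Nat.card {E : Fin n → Fin n → Bool //
        (bReadability (fun u v => E u v = true) : ℝ) ≤ (n : ℝ) / (15 * Real.logb 2 n)} : ℝ)
      ≤ (2:ℝ) ^ ((2:ℝ) * (n:ℝ)^2 / 3) := by
  have hn2 : (2:ℝ) ≤ (n:ℝ) := by
    have h : (2:ℕ) ≤ n := by omega
    exact_mod_cast h
  have hL1 : 1 ≤ Real.logb 2 (n:ℝ) := by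
    rw [Real.logb, le_div_iff₀ (Real.log_pos (by norm_num)), one_mul]
    exact Real.log_le_log (by norm_num) hn2
  have htnn : 0 ≤ (n:ℝ) / (15 * Real.logb 2 n) := by
    apply div_nonneg (Nat.cast_nonneg n)
    linarith
  set r₀ := ⌊(n:ℝ)/(15 * Real.logb 2 n)⌋₊ with hr₀
  have hmono : Nat.card {E : Fin n → Fin n → Bool //
      (bReadability (fun u v => E u v = true) : ℝ) ≤ (n : ℝ) / (15 * Real.logb 2 n)}
      ≤ Nat.card {E : Fin n → Fin n → Bool //
        bReadability (fun u v => E u v = true) ≤ r₀} := by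
    apply Nat.card_le_card_of_injective
      (fun E => ⟨E.1, Nat.le_floor E.2⟩)
    intro a b hab
    have h' : (a.1 : Fin n → Fin n → Bool) = b.1 :=
      congrArg (fun x : {E : Fin n → Fin n → Bool //
        bReadability (fun u v => E u v = true) ≤ r₀} => x.1) hab
    exact Subtype.ext h'
  have h2 := card_bound n r₀
  have h3 := main_real_bound n r₀ hn (Nat.floor_le htnn)
  calc (Nat.card {E : Fin n → Fin n → Bool //
      (bReadability (fun u v => E u v = true) : ℝ) ≤ (n : ℝ) / (15 * Real.logb 2 n)} : ℝ)
      ≤ (Nat.card {E : Fin n → Fin n → Bool //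
        bReadability (fun u v => E u v = true) ≤ r₀} : ℝ) := by exact_mod_cast hmono
    _ ≤ (((r₀+1) * ((2*n*r₀+1)^(r₀+1))^n * ((2*n*r₀+1)^(r₀+1))^n : ℕ) : ℝ) := by
        exact_mod_cast h2
    _ ≤ (2:ℝ) ^ ((2:ℝ) * (n:ℝ)^2 / 3) := h3

theorem card_total (n : ℕ) : Nat.card (Fin n → Fin n → Bool) = 2 ^ (n^2) := by
  rw [Nat.card_eq_fintype_card]
  rw [Fintype.card_fun, Fintype.card_fun]
  simp only [Fintype.card_bool, Fintype.card_fin]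
  rw [← pow_mul, ← pow_two]

theorem cover_card (n : ℕ) :
    2 ^ (n^2) ≤
      Nat.card {E : Fin n → Fin n → Bool //
        (bReadability (fun u v => E u v = true) : ℝ) ≤ (n : ℝ) / (15 * Real.logb 2 n)} +
      Nat.card {E : Fin n → Fin n → Bool //
        (n : ℝ) / (15 * Real.logb 2 n) ≤ (bReadability (fun u v => E u v = true) : ℝ)} := by
  classical
  set s1 : Set (Fin n → Fin n → Bool) :=
    {E | (bReadability (fun u v => E u v = true) : ℝ) ≤ (n : ℝ) / (15 * Real.logb 2 n)} with hs1
  set s2 : Set (Fin n → Fin n → Bool) :=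
    {E | (n : ℝ) / (15 * Real.logb 2 n) ≤ (bReadability (fun u v => E u v = true) : ℝ)} with hs2
  have huniv : (Set.univ : Set (Fin n → Fin n → Bool)) = s1 ∪ s2 := by
    ext E
    simp only [hs1, hs2, Set.mem_univ, Set.mem_union, Set.mem_setOf_eq, true_iff]
    exact le_total _ _
  calc 2^(n^2) = (Set.univ : Set (Fin n → Fin n → Bool)).ncard := by
        rw [Set.ncard_univ, card_total]
    _ = (s1 ∪ s2).ncard := by rw [huniv]
    _ ≤ s1.ncard + s2.ncard := Set.ncard_union_le s1 s2
    _ = _ := by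
        rw [← Nat.card_coe_set_eq, ← Nat.card_coe_set_eq]
        rfl

theorem cardQ_le (n : ℕ) :
    Nat.card {E : Fin n → Fin n → Bool //
      (n : ℝ) / (15 * Real.logb 2 n) ≤ (bReadability (fun u v => E u v = true) : ℝ)}
      ≤ 2^(n^2) := by
  rw [← card_total n]
  exact Nat.card_le_card_of_injective Subtype.val Subtype.coe_injective

end Statement12Aux

/-- For all sufficiently large `n`, at most `2^{2n²/3}` of the `2^{n²}` balanced
bipartite graphs on parts `Fin n` have readability at most `n/(15·log₂ n)`; consequently the
fraction of such graphs with readability at least `n/(15·log₂ n)` tends to `1`. -/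
theorem statement12 :
    (∃ N : ℕ, ∀ n : ℕ, N ≤ n →
      (Nat.card {E : Fin n → Fin n → Bool //
          (bReadability (fun u v => E u v = true) : ℝ) ≤ (n : ℝ) / (15 * Real.logb 2 n)} : ℝ)
        ≤ 2 ^ ((2 : ℝ) * (n : ℝ) ^ 2 / 3)) ∧
    Filter.Tendsto (fun n : ℕ =>
      (Nat.card {E : Fin n → Fin n → Bool //
          (n : ℝ) / (15 * Real.logb 2 n) ≤ (bReadability (fun u v => E u v = true) : ℝ)} : ℝ)
        / 2 ^ (n ^ 2)) Filter.atTop (nhds 1) := by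
  constructor
  · exact ⟨1000000, fun n hn => count_P_le n hn⟩
  · have htend : Filter.Tendsto (fun n : ℕ => 1 - ((1:ℝ)/2)^n) Filter.atTop (nhds 1) := by
      have h0 : Filter.Tendsto (fun n : ℕ => ((1:ℝ)/2)^n) Filter.atTop (nhds 0) :=
        tendsto_pow_atTop_nhds_zero_of_lt_one (by norm_num) (by norm_num)
      have h1 := (tendsto_const_nhds (x := (1:ℝ)) (f := Filter.atTop (α := ℕ))).sub h0
      simpa using h1
    apply tendsto_of_tendsto_of_tendsto_of_le_of_le' htend tendsto_const_nhds
    · filter_upwards [Filter.eventually_ge_atTop 1000000] with n hn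
      have h1 : (0:ℝ) < (2:ℝ)^(n^2) := by positivity
      rw [le_div_iff₀ h1]
      have hcover := cover_card n
      have hcoverR : ((2:ℝ)^(n^2)) ≤
          (Nat.card {E : Fin n → Fin n → Bool //
            (bReadability (fun u v => E u v = true) : ℝ) ≤
              (n : ℝ) / (15 * Real.logb 2 n)} : ℝ) +
          (Nat.card {E : Fin n → Fin n → Bool //
            (n : ℝ) / (15 * Real.logb 2 n) ≤
              (bReadability (fun u v => E u v = true) : ℝ)} : ℝ) := by
        exact_mod_cast hcover
      have hP := count_P_le n hn
      have hratio : (2:ℝ) ^ ((2:ℝ)*(n:ℝ)^2/3) ≤ ((1:ℝ)/2)^n * (2:ℝ)^(n^2) := by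
        have e1 : ((1:ℝ)/2)^n * (2:ℝ)^(n^2) = (2:ℝ) ^ (((n^2:ℕ):ℝ) - (n:ℝ)) := by
          rw [Real.rpow_sub (by norm_num : (0:ℝ) < 2), Real.rpow_natCast, Real.rpow_natCast]
          rw [one_div, inv_pow]
          ring
        rw [e1, Real.rpow_le_rpow_left_iff (by norm_num : (1:ℝ) < 2)]
        push_cast
        have hnR : (1000000:ℝ) ≤ (n:ℝ) := by exact_mod_cast hn
        nlinarith
      nlinarith [hP, hcoverR, hratio]
    · filter_upwards with n
      have h1 : (0:ℝ) < (2:ℝ)^(n^2) := by positivity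
      rw [div_le_one h1]
      have h2 := cardQ_le n
      calc (Nat.card {E : Fin n → Fin n → Bool //
          (n : ℝ) / (15 * Real.logb 2 n) ≤ (bReadability (fun u v => E u v = true) : ℝ)} : ℝ)
          ≤ ((2^(n^2):ℕ):ℝ) := by exact_mod_cast h2
        _ = (2:ℝ)^(n^2) := by push_cast; ring


end Readability
end

section
/- Let G = (V_s, V_p, E) be a bipartite graph that is not a matching (i.e., some vertex of G has degree at least 2). Then r(G) ≥ DT(G) + 1, where DT(G) is the distinctness of G. -/
namespace Readability

open Classical in
lemma step {Vs Vp : Type*} (E : Vs → Vp → Prop) (a : Vs) (b : Vp) {r B : ℕ} (hr : 1 ≤ r)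
    (ls : Vs → List ℕ) (lp : Vp → List ℕ)
    (hls : ∀ u, (ls u).length = r) (hlp : ∀ v, (lp v).length = r)
    (hBs : ∀ u, ∀ c ∈ ls u, c < B) (hBp : ∀ v, ∀ c ∈ lp v, c < B) :
    ∃ (ls' : Vs → List ℕ) (lp' : Vp → List ℕ),
      (∀ u, (ls' u).length = 2*r+1) ∧ (∀ v, (lp' v).length = 2*r+1) ∧
      (∀ u, ∀ c ∈ ls' u, c < B+2) ∧ (∀ v, ∀ c ∈ lp' v, c < B+2) ∧
      (∀ u v, (∃ i, OverlapsBy (ls' u) (lp' v) i) ↔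
        ((∃ i, OverlapsBy (ls u) (lp v) i) ∨ (u = a ∧ v = b ∧ E a b))) := by
  set A : Vs → List ℕ := fun u => if u = a ∧ E a b then lp b else List.replicate r (B+1) with hA
  set β : Vp → List ℕ := fun v => if v = b ∧ E a b then ls a else List.replicate r (B+1) with hβ
  have hAlen : ∀ u, (A u).length = r := by
    intro u; by_cases h : u = a ∧ E a b <;> simp [hA, h, hlp]
  have hβlen : ∀ v, (β v).length = r := by
    intro v; by_cases h : v = b ∧ E a b <;> simp [hβ, h, hls]
  have hAB : ∀ u, ∀ c ∈ A u, c < B + 2 := by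
    intro u c hc
    by_cases h : u = a ∧ E a b
    · simp only [hA, if_pos h] at hc; have := hBp b c hc; omega
    · simp only [hA, if_neg h, List.mem_replicate] at hc; omega
  have hβB : ∀ v, ∀ c ∈ β v, c < B + 2 := by
    intro v c hc
    by_cases h : v = b ∧ E a b
    · simp only [hβ, if_pos h] at hc; have := hBs a c hc; omega
    · simp only [hβ, if_neg h, List.mem_replicate] at hc; omega
  refine ⟨fun u => A u ++ B :: ls u, fun v => lp v ++ B :: β v, ?_, ?_, ?_, ?_, ?_⟩
  · intro u; simp [hAlen, hls]; omega
  · intro v; simp [hβlen, hlp]; omega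
  · intro u c hc
    simp only [List.mem_append, List.mem_cons] at hc
    rcases hc with h | h | h
    · exact hAB u c h
    · omega
    · have := hBs u c h; omega
  · intro v c hc
    simp only [List.mem_append, List.mem_cons] at hc
    rcases hc with h | h | h
    · have := hBp v c h; omega
    · omega
    · exact hβB v c h
  · intro u v
    have hlen1 : (A u ++ B :: ls u).length = 2*r+1 := by simp [hAlen, hls]; omega
    have hlen2 : (lp v ++ B :: β v).length = 2*r+1 := by simp [hβlen, hlp]; omega
    -- computation for i ≤ r
    have comp1 : ∀ i, i ≤ r →
        (A u ++ B :: ls u).drop ((A u ++ B :: ls u).length - i) = (ls u).drop ((ls u).length - i) ∧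
        (lp v ++ B :: β v).take i = (lp v).take i := by
      intro i hi
      constructor
      · rw [hlen1, hls, List.drop_append]
        have h1 : 2*r+1-i - (A u).length = r + 1 - i := by rw [hAlen]; omega
        have h2 : (A u).drop (2*r+1-i) = [] := by
          apply List.drop_eq_nil_of_le; rw [hAlen]; omega
        rw [h1, h2]
        have : r + 1 - i = (r - i) + 1 := by omega
        rw [this, List.nil_append, List.drop_succ_cons]
      · rw [List.take_append]
        have h1 : i - (lp v).length = 0 := by rw [hlp]; omega
        rw [h1, List.take_zero, List.append_nil]
    constructor
    · rintro ⟨i, hi1, hi2, hi3⟩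
      try dsimp only at hi2 hi3
      rw [hlen1, hlen2, min_self] at hi2
      rcases Nat.lt_or_ge r i with hir | hir
      rotate_left
      · -- i ≤ r: old overlap
        obtain ⟨c1, c2⟩ := comp1 i hir
        rw [c1, c2] at hi3
        exact Or.inl ⟨i, hi1, by rw [hls, hlp, min_self]; omega, hi3⟩
      rcases Nat.lt_or_ge i (2*r+1) with hir2 | hir2
      · -- middle region: contradiction
        exfalso
        set j : ℕ := i - (r+1) with hj
        have hjr : j < r := by omega
        have hL : (A u ++ B :: ls u).drop ((A u ++ B :: ls u).length - i)
            = (A u).drop (2*r+1 - i) ++ B :: ls u := by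
          rw [hlen1, List.drop_append]
          have : 2*r+1-i - (A u).length = 0 := by rw [hAlen]; omega
          rw [this, List.drop_zero]
        have hR : (lp v ++ B :: β v).take i = lp v ++ B :: (β v).take j := by
          rw [List.take_append]
          have h1 : (lp v).take i = lp v := List.take_of_length_le (by rw [hlp]; omega)
          have h2 : i - (lp v).length = j + 1 := by rw [hlp]; omega
          rw [h1, h2, List.take_succ_cons]
        rw [hL, hR] at hi3
        have hdlen : ((A u).drop (2*r+1 - i)).length = j := by
          rw [List.length_drop, hAlen]; omega
        have hLj : ((A u).drop (2*r+1 - i) ++ B :: ls u)[j]? = some B := by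
          rw [List.getElem?_append_right (le_of_eq hdlen), hdlen]
          simp
        have hRj : (lp v ++ B :: (β v).take j)[j]? = some ((lp v)[j]'(by rw [hlp]; omega)) := by
          rw [List.getElem?_append_left (by rw [hlp]; omega)]
          exact List.getElem?_eq_getElem _
        rw [hi3, hRj] at hLj
        have hBj : B = (lp v)[j]'(by rw [hlp]; omega) := (Option.some_inj.mp hLj).symm
        have hBmem : B ∈ lp v := by rw [hBj]; exact List.getElem_mem _
        have := hBp v B hBmem
        omega
      · -- i = 2r+1: full equality
        have hie : i = 2*r+1 := by omega
        subst hie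
        rw [hlen1] at hi3
        have h0 : (A u ++ B :: ls u).drop (2*r+1 - (2*r+1)) = A u ++ B :: ls u := by simp
        have h1 : (lp v ++ B :: β v).take (2*r+1) = lp v ++ B :: β v :=
          List.take_of_length_le (by omega)
        rw [h0, h1] at hi3
        have hinj := List.append_inj hi3 (by rw [hAlen, hlp])
        obtain ⟨hinj1, hinj2⟩ := hinj
        have hinj3 : ls u = β v := by simpa using hinj2
        have hua : u = a ∧ E a b := by
          by_contra hcon
          rw [hA] at hinj1; simp only [if_neg hcon] at hinj1
          have : (B+1) ∈ lp v := by
            rw [← hinj1]; exact List.mem_replicate.2 ⟨by omega, rfl⟩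
          have := hBp v _ this; omega
        have hvb : v = b ∧ E a b := by
          by_contra hcon
          rw [hβ] at hinj3; simp only [if_neg hcon] at hinj3
          have : (B+1) ∈ ls u := by
            rw [hinj3]; exact List.mem_replicate.2 ⟨by omega, rfl⟩
          have := hBs u _ this; omega
        exact Or.inr ⟨hua.1, hvb.1, hua.2⟩
    · rintro (⟨i, hi1, hi2, hi3⟩ | ⟨hu, hv, hEab⟩)
      · rw [hls, hlp, min_self] at hi2
        obtain ⟨c1, c2⟩ := comp1 i hi2
        refine ⟨i, hi1, by (try dsimp only); rw [hlen1, hlen2, min_self]; omega, ?_⟩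
        try dsimp only
        rw [c1, c2, ← hi3, hls]
      · subst hu; subst hv
        refine ⟨2*r+1, by omega, by (try dsimp only); rw [hlen1, hlen2, min_self], ?_⟩
        try dsimp only
        rw [hlen1]
        have h0 : (A u ++ B :: ls u).drop (2*r+1 - (2*r+1)) = A u ++ B :: ls u := by simp
        have h1 : (lp v ++ B :: β v).take (2*r+1) = lp v ++ B :: β v :=
          List.take_of_length_le (by omega)
        try dsimp only
        rw [h0, h1]
        simp [hA, hβ, hEab]


lemma buildOn {Vs Vp : Type*} (E : Vs → Vp → Prop) (L : List (Vs × Vp)) :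
    ∃ (r B : ℕ) (ls : Vs → List ℕ) (lp : Vp → List ℕ), 1 ≤ r ∧
      (∀ u, (ls u).length = r) ∧ (∀ v, (lp v).length = r) ∧
      (∀ u, ∀ c ∈ ls u, c < B) ∧ (∀ v, ∀ c ∈ lp v, c < B) ∧
      ∀ u v, (∃ i, OverlapsBy (ls u) (lp v) i) ↔ (E u v ∧ (u, v) ∈ L) := by
  induction L with
  | nil =>
    refine ⟨1, 2, fun _ => [0], fun _ => [1], le_refl _, fun _ => rfl, fun _ => rfl,
      ?_, ?_, ?_⟩
    · intro u c hc; simp at hc; omega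
    · intro v c hc; simp at hc; omega
    · intro u v
      simp only [List.not_mem_nil, and_false, iff_false]
      rintro ⟨i, hi1, hi2, hi3⟩
      simp only [List.length_cons, List.length_nil, min_self] at hi2
      have : i = 1 := by omega
      subst this
      simp at hi3
  | cons p L IH =>
    obtain ⟨r, B, ls, lp, hr, hls, hlp, hBs, hBp, hrel⟩ := IH
    obtain ⟨ls', lp', h1, h2, h3, h4, h5⟩ := step E p.1 p.2 hr ls lp hls hlp hBs hBp
    refine ⟨2*r+1, B+2, ls', lp', by omega, h1, h2, h3, h4, ?_⟩
    intro u v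
    rw [h5 u v, hrel u v]
    constructor
    · rintro (⟨he, hm⟩ | ⟨hu, hv, he⟩)
      · exact ⟨he, List.mem_cons_of_mem _ hm⟩
      · subst hu; subst hv
        exact ⟨he, by simp⟩
    · rintro ⟨he, hm⟩
      rcases List.mem_cons.mp hm with h | h
      · right
        have : u = p.1 ∧ v = p.2 := Prod.mk.injEq .. ▸ (by simpa [Prod.ext_iff] using h)
        exact ⟨this.1, this.2, by rwa [← this.1, ← this.2]⟩
      · exact Or.inl ⟨he, h⟩

lemma labeling_exists {Vs Vp : Type*} [Fintype Vs] [Fintype Vp] (E : Vs → Vp → Prop) :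
    ∃ (r : ℕ) (ls : Vs → List ℕ) (lp : Vp → List ℕ), IsOverlapLabeling E r ls lp := by
  obtain ⟨r, B, ls, lp, hr, hls, hlp, _, _, hrel⟩ :=
    buildOn E (Finset.univ : Finset (Vs × Vp)).toList
  refine ⟨r, ls, lp, hls, hlp, fun u v => ?_⟩
  rw [hrel u v]
  simp


lemma ov_overlaps {x y : List ℕ} (h : ∃ i, OverlapsBy x y i) : OverlapsBy x y (ov x y) :=
  Nat.sInf_mem h

lemma overlapsBy_of_take_eq {x y y' : List ℕ} {i k : ℕ} (h : OverlapsBy x y i) (hik : i ≤ k)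
    (hlen : y'.length = y.length) (hk : y.take k = y'.take k) : OverlapsBy x y' i := by
  obtain ⟨h1, h2, h3⟩ := h
  refine ⟨h1, by rw [hlen]; exact h2, ?_⟩
  have h4 := congrArg (List.take i) hk
  rw [List.take_take, List.take_take, Nat.min_eq_left hik] at h4
  rw [h3, h4]

lemma overlapsBy_of_drop_eq {x x' y : List ℕ} {i k : ℕ} (h : OverlapsBy x y i) (hik : i ≤ k)
    (hkx : k ≤ x.length) (hlen : x'.length = x.length)
    (hk : x.drop (x.length - k) = x'.drop (x'.length - k)) : OverlapsBy x' y i := by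
  obtain ⟨h1, h2, h3⟩ := h
  refine ⟨h1, by rw [hlen]; exact h2, ?_⟩
  have e1 : x.drop (x.length - i) = (x.drop (x.length - k)).drop (k - i) := by
    rw [List.drop_drop]; congr 1; omega
  have e2 : x'.drop (x'.length - i) = (x'.drop (x'.length - k)).drop (k - i) := by
    rw [List.drop_drop]; congr 1; omega
  rw [e2, ← hk, ← e1, h3]

lemma distinctness_le_s {Vs Vp : Type*} (E : Vs → Vp → Prop) {u v : Vs} (h : u ≠ v) :
    distinctness E ≤ DTpair E u v :=
  Nat.sInf_le (Set.mem_union_left _ ⟨u, v, h, rfl⟩)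

lemma distinctness_le_p {Vs Vp : Type*} (E : Vs → Vp → Prop) {u v : Vp} (h : u ≠ v) :
    distinctness E ≤ DTpair (fun p s => E s p) u v :=
  Nat.sInf_le (Set.mem_union_right _ ⟨u, v, h, rfl⟩)

lemma ncard_le_of_maps_icc_diff {W : Type*} [Fintype W] {S : Set W} (f : W → ℕ) {a b e : ℕ}
    (hmem : ∀ s ∈ S, f s ∈ (↑(Finset.Icc a b \ {e}) : Set ℕ))
    (hinj : Set.InjOn f S) : S.ncard ≤ (Finset.Icc a b \ {e}).card := by
  have := Set.ncard_le_ncard_of_injOn f hmem hinj (Finset.finite_toSet _)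
  rwa [Set.ncard_coe_finset] at this

lemma ncard_le_of_maps_icc {W : Type*} [Fintype W] {S : Set W} (f : W → ℕ) {a b : ℕ}
    (hmem : ∀ s ∈ S, f s ∈ (↑(Finset.Icc a b) : Set ℕ))
    (hinj : Set.InjOn f S) : S.ncard ≤ b + 1 - a := by
  have := Set.ncard_le_ncard_of_injOn f hmem hinj (Finset.finite_toSet _)
  rwa [Set.ncard_coe_finset, Nat.card_Icc] at this


lemma key {Vs Vp : Type*} [Fintype Vs] [Fintype Vp] (E : Vs → Vp → Prop) {r : ℕ}
    {ls : Vs → List ℕ} {lp : Vp → List ℕ}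
    (hls : ∀ u, (ls u).length = r) (hlp : ∀ v, (lp v).length = r)
    (hE : ∀ u v, E u v ↔ ∃ i, OverlapsBy (ls u) (lp v) i) :
    ∀ (n k : ℕ), 1 ≤ k → k ≤ r → n = r - k →
      ((∃ a b : Vp, a ≠ b ∧ (lp a).take k = (lp b).take k) ∨
       (∃ a b : Vs, a ≠ b ∧ (ls a).drop (r - k) = (ls b).drop (r - k))) →
      distinctness E ≤ r - k := by
  intro n
  induction n using Nat.strong_induction_on with
  | _ n IH =>
    intro k hk1 hkr hn hcase
    have hIH' : ∀ t, k < t → t ≤ r →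
        ((∃ a b : Vp, a ≠ b ∧ (lp a).take t = (lp b).take t) ∨
         (∃ a b : Vs, a ≠ b ∧ (ls a).drop (r - t) = (ls b).drop (r - t))) →
        distinctness E ≤ r - k := by
      intro t h1 h2 hc
      have := IH (r - t) (by omega) t (by omega) h2 rfl hc
      omega
    rcases hcase with ⟨a, b, hab, hpre⟩ | ⟨a, b, hab, hsuf⟩
    · -- Vp pair with common prefix of length k
      rcases eq_or_lt_of_le hkr with hke | hklt
      · -- k = r : identical labels
        have ha' : (lp a).length ≤ k := by rw [hlp]; omega
        have hb' : (lp b).length ≤ k := by rw [hlp]; omega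
        have hlab : lp a = lp b := by
          calc lp a = (lp a).take k := (List.take_of_length_le ha').symm
            _ = (lp b).take k := hpre
            _ = lp b := List.take_of_length_le hb'
        have hNeq : ∀ s, E s a ↔ E s b := fun s => by rw [hE, hE, hlab]
        have hDT : DTpair (fun p s => E s p) a b = 0 := by
          have e1 : {s : Vs | E s a ∧ ¬ E s b} = ∅ := by
            ext s; simp only [Set.mem_setOf_eq, Set.mem_empty_iff_false, iff_false]
            rw [hNeq s]; tauto
          have e2 : {s : Vs | E s b ∧ ¬ E s a} = ∅ := by
            ext s; simp only [Set.mem_setOf_eq, Set.mem_empty_iff_false, iff_false]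
            rw [hNeq s]; tauto
          have h' : DTpair (fun p s => E s p) a b =
              max {s : Vs | E s a ∧ ¬ E s b}.ncard {s : Vs | E s b ∧ ¬ E s a}.ncard := rfl
          rw [h', e1, e2]
          simp
        have hd := distinctness_le_p E hab
        rw [hDT] at hd; omega
      · -- k < r
        have hmem1 : ∀ s ∈ {s : Vs | E s a ∧ ¬ E s b}, ov (ls s) (lp a) ∈
            (↑(Finset.Icc (k+1) r) : Set ℕ) := by
          intro s hs
          obtain ⟨hsa, hsb⟩ := hs
          have hov := ov_overlaps ((hE s a).1 hsa)
          have hub : ov (ls s) (lp a) ≤ r := le_trans hov.2.1 (by rw [hls, hlp, min_self])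
          have hlb : ¬ (ov (ls s) (lp a) ≤ k) := fun hle =>
            hsb ((hE s b).2 ⟨_, overlapsBy_of_take_eq hov hle (by rw [hlp, hlp]) hpre⟩)
          simp only [Finset.coe_Icc, Set.mem_Icc]; omega
        have hmem2 : ∀ s ∈ {s : Vs | E s b ∧ ¬ E s a}, ov (ls s) (lp b) ∈
            (↑(Finset.Icc (k+1) r) : Set ℕ) := by
          intro s hs
          obtain ⟨hsb, hsa⟩ := hs
          have hov := ov_overlaps ((hE s b).1 hsb)
          have hub : ov (ls s) (lp b) ≤ r := le_trans hov.2.1 (by rw [hls, hlp, min_self])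
          have hlb : ¬ (ov (ls s) (lp b) ≤ k) := fun hle =>
            hsa ((hE s a).2 ⟨_, overlapsBy_of_take_eq hov hle (by rw [hlp, hlp]) hpre.symm⟩)
          simp only [Finset.coe_Icc, Set.mem_Icc]; omega
        by_cases hinj1 : Set.InjOn (fun s => ov (ls s) (lp a)) {s : Vs | E s a ∧ ¬ E s b}
        · by_cases hinj2 : Set.InjOn (fun s => ov (ls s) (lp b)) {s : Vs | E s b ∧ ¬ E s a}
          · have c1 := ncard_le_of_maps_icc _ hmem1 hinj1
            have c2 := ncard_le_of_maps_icc _ hmem2 hinj2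
            have h' : DTpair (fun p s => E s p) a b =
                max {s : Vs | E s a ∧ ¬ E s b}.ncard {s : Vs | E s b ∧ ¬ E s a}.ncard := rfl
            have hDT : DTpair (fun p s => E s p) a b ≤ r - k := by
              rw [h']; exact max_le (by omega) (by omega)
            have hd := distinctness_le_p E hab
            omega
          · rw [Set.InjOn] at hinj2; push_neg at hinj2
            obtain ⟨s, hs, s', hs', hfeq, hne⟩ := hinj2
            have hov1 := ov_overlaps ((hE s b).1 hs.1)
            have hov2 := ov_overlaps ((hE s' b).1 hs'.1)
            have htmem := hmem2 s hs
            simp only [Finset.coe_Icc, Set.mem_Icc] at htmem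
            refine hIH' (ov (ls s) (lp b)) (by omega) (by omega) (Or.inr ⟨s, s', hne, ?_⟩)
            have e1 := hov1.2.2
            have e2 := hov2.2.2
            rw [hls] at e1
            rw [hls] at e2
            rw [hfeq] at e1 ⊢
            rw [e1, e2]
        · rw [Set.InjOn] at hinj1; push_neg at hinj1
          obtain ⟨s, hs, s', hs', hfeq, hne⟩ := hinj1
          have hov1 := ov_overlaps ((hE s a).1 hs.1)
          have hov2 := ov_overlaps ((hE s' a).1 hs'.1)
          have htmem := hmem1 s hs
          simp only [Finset.coe_Icc, Set.mem_Icc] at htmem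
          refine hIH' (ov (ls s) (lp a)) (by omega) (by omega) (Or.inr ⟨s, s', hne, ?_⟩)
          have e1 := hov1.2.2
          have e2 := hov2.2.2
          rw [hls] at e1
          rw [hls] at e2
          rw [hfeq] at e1 ⊢
          rw [e1, e2]
    · -- Vs pair with common suffix of length k
      rcases eq_or_lt_of_le hkr with hke | hklt
      · have hlab : ls a = ls b := by
          have h0 : r - k = 0 := by omega
          rw [h0, List.drop_zero, List.drop_zero] at hsuf
          exact hsuf
        have hNeq : ∀ v, E a v ↔ E b v := fun v => by rw [hE, hE, hlab]
        have hDT : DTpair E a b = 0 := by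
          have e1 : {p : Vp | E a p ∧ ¬ E b p} = ∅ := by
            ext p; simp only [Set.mem_setOf_eq, Set.mem_empty_iff_false, iff_false]
            rw [hNeq p]; tauto
          have e2 : {p : Vp | E b p ∧ ¬ E a p} = ∅ := by
            ext p; simp only [Set.mem_setOf_eq, Set.mem_empty_iff_false, iff_false]
            rw [hNeq p]; tauto
          have h' : DTpair E a b =
              max {p : Vp | E a p ∧ ¬ E b p}.ncard {p : Vp | E b p ∧ ¬ E a p}.ncard := rfl
          rw [h', e1, e2]
          simp
        have hd := distinctness_le_s E hab
        rw [hDT] at hd; omega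
      · have hsuf' : (ls a).drop ((ls a).length - k) = (ls b).drop ((ls b).length - k) := by
          rw [hls, hls]; exact hsuf
        have hmem1 : ∀ v ∈ {p : Vp | E a p ∧ ¬ E b p}, ov (ls a) (lp v) ∈
            (↑(Finset.Icc (k+1) r) : Set ℕ) := by
          intro v hv
          obtain ⟨hva, hvb⟩ := hv
          have hov := ov_overlaps ((hE a v).1 hva)
          have hub : ov (ls a) (lp v) ≤ r := le_trans hov.2.1 (by rw [hls, hlp, min_self])
          have hlb : ¬ (ov (ls a) (lp v) ≤ k) := fun hle =>
            hvb ((hE b v).2 ⟨_, overlapsBy_of_drop_eq hov hle (by rw [hls]; omega)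
              (by rw [hls, hls]) hsuf'⟩)
          simp only [Finset.coe_Icc, Set.mem_Icc]; omega
        have hmem2 : ∀ v ∈ {p : Vp | E b p ∧ ¬ E a p}, ov (ls b) (lp v) ∈
            (↑(Finset.Icc (k+1) r) : Set ℕ) := by
          intro v hv
          obtain ⟨hvb, hva⟩ := hv
          have hov := ov_overlaps ((hE b v).1 hvb)
          have hub : ov (ls b) (lp v) ≤ r := le_trans hov.2.1 (by rw [hls, hlp, min_self])
          have hlb : ¬ (ov (ls b) (lp v) ≤ k) := fun hle =>
            hva ((hE a v).2 ⟨_, overlapsBy_of_drop_eq hov hle (by rw [hls]; omega)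
              (by rw [hls, hls]) hsuf'.symm⟩)
          simp only [Finset.coe_Icc, Set.mem_Icc]; omega
        by_cases hinj1 : Set.InjOn (fun v => ov (ls a) (lp v)) {p : Vp | E a p ∧ ¬ E b p}
        · by_cases hinj2 : Set.InjOn (fun v => ov (ls b) (lp v)) {p : Vp | E b p ∧ ¬ E a p}
          · have c1 := ncard_le_of_maps_icc _ hmem1 hinj1
            have c2 := ncard_le_of_maps_icc _ hmem2 hinj2
            have h' : DTpair E a b =
                max {p : Vp | E a p ∧ ¬ E b p}.ncard {p : Vp | E b p ∧ ¬ E a p}.ncard := rfl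
            have hDT : DTpair E a b ≤ r - k := by
              rw [h']; exact max_le (by omega) (by omega)
            have hd := distinctness_le_s E hab
            omega
          · rw [Set.InjOn] at hinj2; push_neg at hinj2
            obtain ⟨v, hv, v', hv', hfeq, hne⟩ := hinj2
            have hov1 := ov_overlaps ((hE b v).1 hv.1)
            have hov2 := ov_overlaps ((hE b v').1 hv'.1)
            have htmem := hmem2 v hv
            simp only [Finset.coe_Icc, Set.mem_Icc] at htmem
            refine hIH' (ov (ls b) (lp v)) (by omega) (by omega) (Or.inl ⟨v, v', hne, ?_⟩)
            have e1 := hov1.2.2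
            have e2 := hov2.2.2
            rw [← hfeq] at e2
            rw [← e1, ← e2]
        · rw [Set.InjOn] at hinj1; push_neg at hinj1
          obtain ⟨v, hv, v', hv', hfeq, hne⟩ := hinj1
          have hov1 := ov_overlaps ((hE a v).1 hv.1)
          have hov2 := ov_overlaps ((hE a v').1 hv'.1)
          have htmem := hmem1 v hv
          simp only [Finset.coe_Icc, Set.mem_Icc] at htmem
          refine hIH' (ov (ls a) (lp v)) (by omega) (by omega) (Or.inl ⟨v, v', hne, ?_⟩)
          have e1 := hov1.2.2
          have e2 := hov2.2.2
          rw [← hfeq] at e2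
          rw [← e1, ← e2]


lemma main_lower {Vs Vp : Type*} [Fintype Vs] [Fintype Vp] (E : Vs → Vp → Prop)
    (hm : NotMatching E) {r : ℕ} {ls : Vs → List ℕ} {lp : Vp → List ℕ}
    (hls : ∀ u, (ls u).length = r) (hlp : ∀ v, (lp v).length = r)
    (hE : ∀ u v, E u v ↔ ∃ i, OverlapsBy (ls u) (lp v) i) :
    distinctness E + 1 ≤ r := by
  have hovr : ∀ u v, E u v → 1 ≤ ov (ls u) (lp v) ∧ ov (ls u) (lp v) ≤ r := by
    intro u v h
    have hov := ov_overlaps ((hE u v).1 h)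
    exact ⟨hov.1, le_trans hov.2.1 (by rw [hls, hlp, min_self])⟩
  have hr1 : 1 ≤ r := by
    rcases hm with ⟨u, p1, p2, _, h1, _⟩ | ⟨p, u1, u2, _, h1, _⟩
    · have := hovr u p1 h1; omega
    · have := hovr u1 p h1; omega
  suffices hle : distinctness E ≤ r - 1 by omega
  have hkey : ∀ t, 1 ≤ t → t ≤ r →
      ((∃ a b : Vp, a ≠ b ∧ (lp a).take t = (lp b).take t) ∨
       (∃ a b : Vs, a ≠ b ∧ (ls a).drop (r - t) = (ls b).drop (r - t))) →
      distinctness E ≤ r - 1 := by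
    intro t ht1 ht2 hc
    have := key E hls hlp hE (r - t) t ht1 ht2 rfl hc
    omega
  rcases hm with ⟨u, p1, p2, hne, h1, h2⟩ | ⟨p, u1, u2, hne, h1, h2⟩
  · -- a vertex u in Vs with two neighbors p1 ≠ p2 in Vp; consider the pair (p1, p2)
    have hov1 := ov_overlaps ((hE u p1).1 h1)
    have hov2 := ov_overlaps ((hE u p2).1 h2)
    by_cases hb1 : ∃ s, (E s p1 ∧ ¬ E s p2) ∧ ov (ls s) (lp p1) = ov (ls u) (lp p1)
    · obtain ⟨s, hs, hoveq⟩ := hb1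
      have hovs := ov_overlaps ((hE s p1).1 hs.1)
      have hsu : s ≠ u := fun h => hs.2 (h ▸ h2)
      refine hkey (ov (ls u) (lp p1)) (hovr u p1 h1).1 (hovr u p1 h1).2
        (Or.inr ⟨s, u, hsu, ?_⟩)
      have e1 := hovs.2.2
      have e2 := hov1.2.2
      rw [hls, hoveq] at e1
      rw [hls] at e2
      rw [e1, e2]
    by_cases hb2 : ∃ s, (E s p2 ∧ ¬ E s p1) ∧ ov (ls s) (lp p2) = ov (ls u) (lp p2)
    · obtain ⟨s, hs, hoveq⟩ := hb2
      have hovs := ov_overlaps ((hE s p2).1 hs.1)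
      have hsu : s ≠ u := fun h => hs.2 (h ▸ h1)
      refine hkey (ov (ls u) (lp p2)) (hovr u p2 h2).1 (hovr u p2 h2).2
        (Or.inr ⟨s, u, hsu, ?_⟩)
      have e1 := hovs.2.2
      have e2 := hov2.2.2
      rw [hls, hoveq] at e1
      rw [hls] at e2
      rw [e1, e2]
    by_cases hinj1 : Set.InjOn (fun s => ov (ls s) (lp p1)) {s : Vs | E s p1 ∧ ¬ E s p2}
    · by_cases hinj2 : Set.InjOn (fun s => ov (ls s) (lp p2)) {s : Vs | E s p2 ∧ ¬ E s p1}
      · push_neg at hb1 hb2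
        have hmem1 : ∀ s ∈ {s : Vs | E s p1 ∧ ¬ E s p2}, ov (ls s) (lp p1) ∈
            (↑(Finset.Icc 1 r \ {ov (ls u) (lp p1)}) : Set ℕ) := by
          intro s hs
          have hb := hovr s p1 hs.1
          have hd := hb1 s hs
          simp only [Finset.coe_sdiff, Finset.coe_Icc, Set.mem_diff, Set.mem_Icc,
            Finset.coe_singleton, Set.mem_singleton_iff]
          exact ⟨⟨hb.1, hb.2⟩, hd⟩
        have hmem2 : ∀ s ∈ {s : Vs | E s p2 ∧ ¬ E s p1}, ov (ls s) (lp p2) ∈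
            (↑(Finset.Icc 1 r \ {ov (ls u) (lp p2)}) : Set ℕ) := by
          intro s hs
          have hb := hovr s p2 hs.1
          have hd := hb2 s hs
          simp only [Finset.coe_sdiff, Finset.coe_Icc, Set.mem_diff, Set.mem_Icc,
            Finset.coe_singleton, Set.mem_singleton_iff]
          exact ⟨⟨hb.1, hb.2⟩, hd⟩
        have hcard1 : (Finset.Icc 1 r \ {ov (ls u) (lp p1)}).card = r - 1 := by
          rw [Finset.card_sdiff_of_subset (Finset.singleton_subset_iff.2
            (Finset.mem_Icc.2 ⟨(hovr u p1 h1).1, (hovr u p1 h1).2⟩))]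
          simp [Nat.card_Icc]
        have hcard2 : (Finset.Icc 1 r \ {ov (ls u) (lp p2)}).card = r - 1 := by
          rw [Finset.card_sdiff_of_subset (Finset.singleton_subset_iff.2
            (Finset.mem_Icc.2 ⟨(hovr u p2 h2).1, (hovr u p2 h2).2⟩))]
          simp [Nat.card_Icc]
        have c1 := ncard_le_of_maps_icc_diff _ hmem1 hinj1
        have c2 := ncard_le_of_maps_icc_diff _ hmem2 hinj2
        rw [hcard1] at c1
        rw [hcard2] at c2
        have h' : DTpair (fun q s => E s q) p1 p2 =
            max {s : Vs | E s p1 ∧ ¬ E s p2}.ncard {s : Vs | E s p2 ∧ ¬ E s p1}.ncard := rfl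
        have hd := distinctness_le_p E hne
        rw [h'] at hd
        omega
      · rw [Set.InjOn] at hinj2; push_neg at hinj2
        obtain ⟨s, hs, s', hs', hfeq, hsne⟩ := hinj2
        have hovs := ov_overlaps ((hE s p2).1 hs.1)
        have hovs' := ov_overlaps ((hE s' p2).1 hs'.1)
        refine hkey (ov (ls s) (lp p2)) (hovr s p2 hs.1).1 (hovr s p2 hs.1).2
          (Or.inr ⟨s, s', hsne, ?_⟩)
        have e1 := hovs.2.2
        have e2 := hovs'.2.2
        rw [hls] at e1
        rw [hls, ← hfeq] at e2
        rw [e1, e2]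
    · rw [Set.InjOn] at hinj1; push_neg at hinj1
      obtain ⟨s, hs, s', hs', hfeq, hsne⟩ := hinj1
      have hovs := ov_overlaps ((hE s p1).1 hs.1)
      have hovs' := ov_overlaps ((hE s' p1).1 hs'.1)
      refine hkey (ov (ls s) (lp p1)) (hovr s p1 hs.1).1 (hovr s p1 hs.1).2
        (Or.inr ⟨s, s', hsne, ?_⟩)
      have e1 := hovs.2.2
      have e2 := hovs'.2.2
      rw [hls] at e1
      rw [hls, ← hfeq] at e2
      rw [e1, e2]
  · -- a vertex p in Vp with two neighbors u1 ≠ u2 in Vs; consider the pair (u1, u2)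
    have hov1 := ov_overlaps ((hE u1 p).1 h1)
    have hov2 := ov_overlaps ((hE u2 p).1 h2)
    by_cases hb1 : ∃ v, (E u1 v ∧ ¬ E u2 v) ∧ ov (ls u1) (lp v) = ov (ls u1) (lp p)
    · obtain ⟨v, hv, hoveq⟩ := hb1
      have hovv := ov_overlaps ((hE u1 v).1 hv.1)
      have hvp : v ≠ p := fun h => hv.2 (h ▸ h2)
      refine hkey (ov (ls u1) (lp p)) (hovr u1 p h1).1 (hovr u1 p h1).2
        (Or.inl ⟨v, p, hvp, ?_⟩)
      have e1 := hovv.2.2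
      have e2 := hov1.2.2
      rw [hoveq] at e1
      rw [← e1, ← e2]
    by_cases hb2 : ∃ v, (E u2 v ∧ ¬ E u1 v) ∧ ov (ls u2) (lp v) = ov (ls u2) (lp p)
    · obtain ⟨v, hv, hoveq⟩ := hb2
      have hovv := ov_overlaps ((hE u2 v).1 hv.1)
      have hvp : v ≠ p := fun h => hv.2 (h ▸ h1)
      refine hkey (ov (ls u2) (lp p)) (hovr u2 p h2).1 (hovr u2 p h2).2
        (Or.inl ⟨v, p, hvp, ?_⟩)
      have e1 := hovv.2.2
      have e2 := hov2.2.2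
      rw [hoveq] at e1
      rw [← e1, ← e2]
    by_cases hinj1 : Set.InjOn (fun v => ov (ls u1) (lp v)) {q : Vp | E u1 q ∧ ¬ E u2 q}
    · by_cases hinj2 : Set.InjOn (fun v => ov (ls u2) (lp v)) {q : Vp | E u2 q ∧ ¬ E u1 q}
      · push_neg at hb1 hb2
        have hmem1 : ∀ v ∈ {q : Vp | E u1 q ∧ ¬ E u2 q}, ov (ls u1) (lp v) ∈
            (↑(Finset.Icc 1 r \ {ov (ls u1) (lp p)}) : Set ℕ) := by
          intro v hv
          have hb := hovr u1 v hv.1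
          have hd := hb1 v hv
          simp only [Finset.coe_sdiff, Finset.coe_Icc, Set.mem_diff, Set.mem_Icc,
            Finset.coe_singleton, Set.mem_singleton_iff]
          exact ⟨⟨hb.1, hb.2⟩, hd⟩
        have hmem2 : ∀ v ∈ {q : Vp | E u2 q ∧ ¬ E u1 q}, ov (ls u2) (lp v) ∈
            (↑(Finset.Icc 1 r \ {ov (ls u2) (lp p)}) : Set ℕ) := by
          intro v hv
          have hb := hovr u2 v hv.1
          have hd := hb2 v hv
          simp only [Finset.coe_sdiff, Finset.coe_Icc, Set.mem_diff, Set.mem_Icc,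
            Finset.coe_singleton, Set.mem_singleton_iff]
          exact ⟨⟨hb.1, hb.2⟩, hd⟩
        have hcard1 : (Finset.Icc 1 r \ {ov (ls u1) (lp p)}).card = r - 1 := by
          rw [Finset.card_sdiff_of_subset (Finset.singleton_subset_iff.2
            (Finset.mem_Icc.2 ⟨(hovr u1 p h1).1, (hovr u1 p h1).2⟩))]
          simp [Nat.card_Icc]
        have hcard2 : (Finset.Icc 1 r \ {ov (ls u2) (lp p)}).card = r - 1 := by
          rw [Finset.card_sdiff_of_subset (Finset.singleton_subset_iff.2
            (Finset.mem_Icc.2 ⟨(hovr u2 p h2).1, (hovr u2 p h2).2⟩))]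
          simp [Nat.card_Icc]
        have c1 := ncard_le_of_maps_icc_diff _ hmem1 hinj1
        have c2 := ncard_le_of_maps_icc_diff _ hmem2 hinj2
        rw [hcard1] at c1
        rw [hcard2] at c2
        have h' : DTpair E u1 u2 =
            max {q : Vp | E u1 q ∧ ¬ E u2 q}.ncard {q : Vp | E u2 q ∧ ¬ E u1 q}.ncard := rfl
        have hd := distinctness_le_s E hne
        rw [h'] at hd
        omega
      · rw [Set.InjOn] at hinj2; push_neg at hinj2
        obtain ⟨v, hv, v', hv', hfeq, hvne⟩ := hinj2
        have hovv := ov_overlaps ((hE u2 v).1 hv.1)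
        have hovv' := ov_overlaps ((hE u2 v').1 hv'.1)
        refine hkey (ov (ls u2) (lp v)) (hovr u2 v hv.1).1 (hovr u2 v hv.1).2
          (Or.inl ⟨v, v', hvne, ?_⟩)
        have e1 := hovv.2.2
        have e2 := hovv'.2.2
        rw [← hfeq] at e2
        rw [← e1, ← e2]
    · rw [Set.InjOn] at hinj1; push_neg at hinj1
      obtain ⟨v, hv, v', hv', hfeq, hvne⟩ := hinj1
      have hovv := ov_overlaps ((hE u1 v).1 hv.1)
      have hovv' := ov_overlaps ((hE u1 v').1 hv'.1)
      refine hkey (ov (ls u1) (lp v)) (hovr u1 v hv.1).1 (hovr u1 v hv.1).2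
        (Or.inl ⟨v, v', hvne, ?_⟩)
      have e1 := hovv.2.2
      have e2 := hovv'.2.2
      rw [← hfeq] at e2
      rw [← e1, ← e2]


/-- If a bipartite graph `G` is not a matching (some vertex has degree ≥ 2),
then `r(G) ≥ DT(G) + 1`. -/
theorem statement13 {Vs Vp : Type*} [Fintype Vs] [Fintype Vp] (E : Vs → Vp → Prop)
    (hm : NotMatching E) :
    distinctness E + 1 ≤ bReadability E := by
  obtain ⟨r0, ls0, lp0, hl0⟩ := labeling_exists E
  have hne : {r | ∃ (ls : Vs → List ℕ) (lp : Vp → List ℕ),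
      IsOverlapLabeling E r ls lp}.Nonempty := ⟨r0, ls0, lp0, hl0⟩
  obtain ⟨ls, lp, hls, hlp, hE⟩ := Nat.sInf_mem hne
  exact main_lower E hm hls hlp hE

end Readability
end

section
/- Let T = (V_s, V_p, E) be a bipartite graph whose underlying undirected graph on V_s ⊔ V_p is a tree (connected and acyclic). Then r(T) ≤ radius(T), where radius(T) is the radius of the underlying tree. -/
namespace Readability

lemma align {L R : ℕ → Prop} (hLR : ∀ a b, L a → R b → a ≠ b) {A B C D : List ℕ}
    (h : A ++ B = C ++ D) (hA : ∀ a ∈ A, L a) (hB : ∀ b ∈ B, R b)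
    (hC : ∀ a ∈ C, L a) (hD : ∀ b ∈ D, R b) : A = C ∧ B = D := by
  rcases List.append_eq_append_iff.1 h with ⟨m, hC', hB'⟩ | ⟨m, hA', hD'⟩
  · cases m with
    | nil => simp at hC' hB'; exact ⟨hC'.symm, hB'⟩
    | cons a t =>
      exfalso
      refine hLR a a ?_ ?_ rfl
      · exact hC a (by rw [hC']; exact List.mem_append.2 (Or.inr (by simp)))
      · exact hB a (by rw [hB']; simp)
  · cases m with
    | nil => simp at hA' hD'; exact ⟨hA', hD'.symm⟩
    | cons a t =>
      exfalso
      refine hLR a a ?_ ?_ rfl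
      · exact hA a (by rw [hA']; exact List.mem_append.2 (Or.inr (by simp)))
      · exact hD a (by rw [hD']; simp)

structure TreeData (Vs Vp : Type*) where
  Adj : (Vs ⊕ Vp) → (Vs ⊕ Vp) → Prop
  c : Vs ⊕ Vp
  p : (Vs ⊕ Vp) → (Vs ⊕ Vp)
  d : (Vs ⊕ Vp) → ℕ
  enc : (Vs ⊕ Vp) → ℕ
  r : ℕ
  henc : Function.Injective enc
  hd0 : ∀ x, d x = 0 ↔ x = c
  hpar : ∀ x, x ≠ c → Adj (p x) x ∧ d (p x) + 1 = d x
  hflip : ∀ x y, Adj x y → x.isLeft = !y.isLeft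
  hsymm : ∀ x y, Adj x y → Adj y x
  huniq : ∀ x y, Adj x y → d y = d x + 1 → p y = x
  hstep : ∀ x y, Adj x y → d y = d x + 1 ∨ d x = d y + 1
  hr : ∀ x, d x ≤ r

namespace TreeData

variable {Vs Vp : Type*} (T : TreeData Vs Vp)

/-- letters -/
noncomputable def g (x : Vs ⊕ Vp) : ℕ := 3 * T.enc x + 3

lemma g_inj : Function.Injective T.g := fun a b h => T.henc (by simp [g] at h; omega)

open scoped Classical in
/-- fuel-based S/P word construction -/
noncomputable def SP : ℕ → (Vs ⊕ Vp) → List ℕ × List ℕ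
  | 0, x => (if x.isLeft then [T.g x] else [], if x.isLeft then [] else [T.g x])
  | (f+1), x =>
    if x = T.c then (if x.isLeft then [T.g x] else [], if x.isLeft then [] else [T.g x])
    else
      let sp := SP f (T.p x)
      if x.isLeft then (T.g x :: sp.1, sp.2) else (sp.1, sp.2 ++ [T.g x])

noncomputable def S (x : Vs ⊕ Vp) : List ℕ := (T.SP (T.d x) x).1
noncomputable def P (x : Vs ⊕ Vp) : List ℕ := (T.SP (T.d x) x).2
noncomputable def F (x : Vs ⊕ Vp) : List ℕ := T.S x ++ T.P x

lemma SP_c (f : ℕ) :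
    T.SP f T.c = (if T.c.isLeft then [T.g T.c] else [], if T.c.isLeft then [] else [T.g T.c]) := by
  cases f <;> simp [SP]

lemma S_c : T.S T.c = if T.c.isLeft then [T.g T.c] else [] := by
  simp [S, SP_c]

lemma P_c : T.P T.c = if T.c.isLeft then [] else [T.g T.c] := by
  simp [P, SP_c]

lemma d_pos {x : Vs ⊕ Vp} (hx : x ≠ T.c) : 0 < T.d x := by
  rcases Nat.eq_zero_or_pos (T.d x) with h | h
  · exact absurd ((T.hd0 x).1 h) hx
  · exact h

lemma SP_ne {x : Vs ⊕ Vp} (hx : x ≠ T.c) :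
    T.SP (T.d x) x =
      (if x.isLeft then (T.g x :: T.S (T.p x), T.P (T.p x))
       else (T.S (T.p x), T.P (T.p x) ++ [T.g x])) := by
  obtain ⟨-, hd⟩ := T.hpar x hx
  have h1 : T.d x = T.d (T.p x) + 1 := hd.symm
  rw [h1]
  rw [SP]
  simp only [if_neg hx]
  by_cases h : x.isLeft <;> simp [h, S, P]

lemma S_left {x : Vs ⊕ Vp} (hx : x ≠ T.c) (hl : x.isLeft) :
    T.S x = T.g x :: T.S (T.p x) := by
  simp [S, SP_ne T hx, hl]

lemma P_left {x : Vs ⊕ Vp} (hx : x ≠ T.c) (hl : x.isLeft) :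
    T.P x = T.P (T.p x) := by
  simp [P, SP_ne T hx, hl]

lemma S_right {x : Vs ⊕ Vp} (hx : x ≠ T.c) (hl : ¬ x.isLeft) :
    T.S x = T.S (T.p x) := by
  simp [S, SP_ne T hx, hl]

lemma P_right {x : Vs ⊕ Vp} (hx : x ≠ T.c) (hl : ¬ x.isLeft) :
    T.P x = T.P (T.p x) ++ [T.g x] := by
  simp [P, SP_ne T hx, hl]

lemma p_flip {x : Vs ⊕ Vp} (hx : x ≠ T.c) : (T.p x).isLeft = !x.isLeft := by
  exact T.hflip _ _ (T.hpar x hx).1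


/-- Strong induction principle along parents. -/
lemma induction_d {Q : (Vs ⊕ Vp) → Prop}
    (h0 : Q T.c)
    (hstep : ∀ x, x ≠ T.c → Q (T.p x) → Q x) : ∀ x, Q x := by
  suffices h : ∀ n x, T.d x = n → Q x by
    intro x; exact h (T.d x) x rfl
  intro n
  induction n with
  | zero => intro x hx; rw [(T.hd0 x).1 hx]; exact h0
  | succ n ih =>
    intro x hx
    have hxc : x ≠ T.c := by
      intro h; rw [h] at hx; rw [(T.hd0 T.c).2 rfl] at hx; omega
    obtain ⟨-, hd⟩ := T.hpar x hxc
    exact hstep x hxc (ih (T.p x) (by omega))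

lemma mem_S : ∀ x, ∀ a ∈ T.S x, ∃ u : Vs, a = T.g (Sum.inl u) := by
  apply T.induction_d (Q := fun x => ∀ a ∈ T.S x, ∃ u : Vs, a = T.g (Sum.inl u))
  · intro a ha
    rw [S_c] at ha
    by_cases h : T.c.isLeft
    · simp [h] at ha
      obtain ⟨u, hu⟩ := Sum.isLeft_iff.1 h
      exact ⟨u, by rw [ha, hu]⟩
    · simp [h] at ha
  · intro x hx ih a ha
    by_cases h : x.isLeft
    · rw [S_left T hx h] at ha
      rcases List.mem_cons.1 ha with ha | ha
      · obtain ⟨u, hu⟩ := Sum.isLeft_iff.1 h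
        exact ⟨u, by rw [ha, hu]⟩
      · exact ih a ha
    · rw [S_right T hx h] at ha; exact ih a ha

lemma mem_P : ∀ x, ∀ a ∈ T.P x, ∃ v : Vp, a = T.g (Sum.inr v) := by
  apply T.induction_d (Q := fun x => ∀ a ∈ T.P x, ∃ v : Vp, a = T.g (Sum.inr v))
  · intro a ha
    rw [P_c] at ha
    by_cases h : T.c.isLeft
    · simp [h] at ha
    · simp [h] at ha
      obtain ⟨v, hv⟩ := Sum.isRight_iff.1 (by simpa using h)
      exact ⟨v, by rw [ha, hv]⟩
  · intro x hx ih a ha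
    by_cases h : x.isLeft
    · rw [P_left T hx h] at ha; exact ih a ha
    · rw [P_right T hx h] at ha
      rcases List.mem_append.1 ha with ha | ha
      · exact ih a ha
      · obtain ⟨v, hv⟩ := Sum.isRight_iff.1 (by simpa using h)
        simp at ha
        exact ⟨v, by rw [ha, hv]⟩

lemma len_SP : ∀ x, (T.S x).length + (T.P x).length = T.d x + 1 := by
  apply T.induction_d (Q := fun x => (T.S x).length + (T.P x).length = T.d x + 1)
  · rw [S_c, P_c, (T.hd0 T.c).2 rfl]
    by_cases h : T.c.isLeft <;> simp [h]
  · intro x hx ih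
    obtain ⟨-, hd⟩ := T.hpar x hx
    by_cases h : x.isLeft
    · rw [S_left T hx h, P_left T hx h]; simp; omega
    · rw [S_right T hx h, P_right T hx h]; simp; omega

lemma count_SP : ∀ x, (T.S x).length + (!x.isLeft && !T.c.isLeft).toNat
    = (T.P x).length + (x.isLeft && T.c.isLeft).toNat := by
  apply T.induction_d (Q := fun x => (T.S x).length + (!x.isLeft && !T.c.isLeft).toNat
    = (T.P x).length + (x.isLeft && T.c.isLeft).toNat)
  · cases hcl : T.c.isLeft
    · simp [S_c, P_c, hcl]
    · simp [S_c, P_c, hcl]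
  · intro x hx ih
    cases h : x.isLeft
    · rw [S_right T hx (by simp [h]), P_right T hx (by simp [h])]
      have hpf : (T.p x).isLeft = true := by rw [T.p_flip hx, h]; rfl
      cases hcl : T.c.isLeft
      · simp [hpf, hcl, h] at ih ⊢; omega
      · simp [hpf, hcl, h] at ih ⊢; omega
    · rw [S_left T hx h, P_left T hx h]
      have hpf : (T.p x).isLeft = false := by rw [T.p_flip hx, h]; rfl
      cases hcl : T.c.isLeft
      · simp [hpf, hcl, h] at ih ⊢; omega
      · simp [hpf, hcl, h] at ih ⊢; omega

lemma S_head {x : Vs ⊕ Vp} (hl : x.isLeft) : ∃ t, T.S x = T.g x :: t := by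
  by_cases hx : x = T.c
  · subst hx; rw [S_c]; exact ⟨[], by simp [hl]⟩
  · exact ⟨_, S_left T hx hl⟩

lemma P_last {x : Vs ⊕ Vp} (hl : ¬ x.isLeft) : ∃ t, T.P x = t ++ [T.g x] := by
  by_cases hx : x = T.c
  · subst hx; rw [P_c]; exact ⟨[], by simp [hl]⟩
  · exact ⟨_, P_right T hx hl⟩

lemma S_ne_nil {x : Vs ⊕ Vp} (hl : x.isLeft) : T.S x ≠ [] := by
  obtain ⟨t, ht⟩ := T.S_head hl; simp [ht]

lemma P_ne_nil {x : Vs ⊕ Vp} (hl : ¬ x.isLeft) : T.P x ≠ [] := by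
  obtain ⟨t, ht⟩ := T.P_last hl; simp [ht]

lemma P_left_eq_nil {x : Vs ⊕ Vp} (hl : x.isLeft) (h : T.P x = []) : x = T.c := by
  by_contra hx
  rw [P_left T hx hl] at h
  exact T.P_ne_nil (by simp [T.p_flip hx, hl]) h

lemma S_right_eq_nil {x : Vs ⊕ Vp} (hl : ¬ x.isLeft) (h : T.S x = []) : x = T.c := by
  by_contra hx
  rw [S_right T hx hl] at h
  have : (T.p x).isLeft := by simp [T.p_flip hx]; simpa using hl
  exact T.S_ne_nil this h

theorem main_adj (x y : Vs ⊕ Vp) (hx : x.isLeft = true) (hy : y.isLeft = false)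
    (i : ℕ) (h1 : 1 ≤ i) (hix : i ≤ T.d x + 1) (hiy : i ≤ T.d y + 1)
    (heq : (T.F x).drop (T.d x + 1 - i) = (T.F y).take i) : T.Adj x y := by
  have lenx := T.len_SP x
  have leny := T.len_SP y
  have hLR : ∀ a b, (∃ u : Vs, a = T.g (Sum.inl u)) → (∃ v : Vp, b = T.g (Sum.inr v)) → a ≠ b := by
    rintro a b ⟨u, rfl⟩ ⟨v, rfl⟩ hab
    exact absurd (T.g_inj hab) (by simp)
  have hxy : x ≠ y := fun h => by rw [h, hy] at hx; exact absurd hx (by simp)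
  -- decompose both sides
  rw [F, F, List.drop_append, List.take_append] at heq
  obtain ⟨hS, hP⟩ := align hLR heq
    (fun a ha => T.mem_S x a (List.drop_subset _ _ ha))
    (fun b hb => T.mem_P x b (List.drop_subset _ _ hb))
    (fun a ha => T.mem_S y a (List.take_subset _ _ ha))
    (fun b hb => T.mem_P y b (List.take_subset _ _ hb))
  by_cases hipx : i ≤ (T.P x).length
  · -- Case I : the matched suffix lies inside P x
    have hdrop : (T.S x).drop (T.d x + 1 - i) = [] := by
      apply List.drop_eq_nil_of_le; omega
    have hSy : T.S y = [] := by
      rw [hdrop] at hS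
      rcases List.take_eq_nil_iff.1 hS.symm with h | h
      · omega
      · exact h
    have hyc : y = T.c := T.S_right_eq_nil (by simp [hy]) hSy
    have hcl : T.c.isLeft = false := by rw [← hyc, hy]
    have hPc : T.P y = [T.g y] := by rw [hyc, P_c, hcl]; simp
    have hsy0 : (T.S y).length = 0 := by rw [hSy]; rfl
    rw [hPc, hsy0] at hP
    have hlen := congrArg List.length hP
    simp [List.length_take, List.length_drop] at hlen
    have hi1 : i = 1 := by omega
    have hxc : x ≠ T.c := fun h => by rw [← h, hx] at hcl; simp at hcl
    have hPx : T.P x = T.P (T.p x) := T.P_left hxc hx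
    obtain ⟨t, ht⟩ := T.P_last (x := T.p x) (by simp [T.p_flip hxc, hx])
    have hkey : T.g (T.p x) = T.g y := by
      have h4 : (T.P x).length = t.length + 1 := by rw [hPx, ht]; simp
      have hidx : T.d x + 1 - i - (T.S x).length = t.length := by omega
      rw [hPx, ht, hidx] at hP
      have h5 : (t ++ [T.g (T.p x)]).drop t.length = [T.g (T.p x)] := by
        simpa using List.drop_left (l₁ := t) (l₂ := [T.g (T.p x)])
      rw [h5] at hP
      simpa [hi1] using hP
    have hpxy : T.p x = y := T.g_inj hkey
    exact T.hsymm _ _ (hpxy ▸ (T.hpar x hxc).1)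
  · -- Case II : i > |P x|
    push_neg at hipx
    have hP' : T.P x = (T.P y).take (i - (T.S y).length) := by
      have h0 : T.d x + 1 - i - (T.S x).length = 0 := by omega
      rw [h0] at hP
      simpa using hP
    have hlenS := congrArg List.length hS
    simp [List.length_take, List.length_drop] at hlenS
    by_cases hisy : i ≤ (T.S y).length
    · -- prefix side still inside S y : forces x = c
      have hPx : T.P x = [] := by
        rw [hP']
        have : i - (T.S y).length = 0 := by omega
        rw [this]; rfl
      have hxc : x = T.c := T.P_left_eq_nil hx hPx
      have hcl : T.c.isLeft = true := by rw [← hxc, hx]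
      have hSx : T.S x = [T.g x] := by rw [hxc, S_c, hcl]; simp
      have hpx0 : (T.P x).length = 0 := by rw [hPx]; rfl
      have hi1 : i = 1 := by
        rw [hSx] at lenx; simp at lenx; omega
      have hyc : y ≠ T.c := fun h => by rw [← h, hy] at hcl; simp at hcl
      have hSy : T.S y = T.S (T.p y) := T.S_right hyc (by simp [hy])
      obtain ⟨t, ht⟩ := T.S_head (x := T.p y) (by simp [T.p_flip hyc, hy])
      have hkey : T.g x = T.g (T.p y) := by
        rw [hSx, hSy, ht, hi1] at hS
        have h2 : (T.d x + 1 - 1) = 0 := by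
          rw [hxc, (T.hd0 T.c).2 rfl]
        rw [h2] at hS
        simpa using hS
      have hpyx : T.p y = x := (T.g_inj hkey).symm
      exact hpyx ▸ (T.hpar y hyc).1
    · push_neg at hisy
      have hSytake : (T.S y).take i = T.S y := List.take_of_length_le (by omega)
      rw [hSytake] at hS
      by_cases hieq : i = T.d x + 1
      · -- S x = S y, so x is the parent of y
        have hSeq : T.S x = T.S y := by
          have : T.d x + 1 - i = 0 := by omega
          rw [this] at hS; simpa using hS
        have hyc : y ≠ T.c := by
          intro h
          have hcl : T.c.isLeft = false := by rw [← h, hy]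
          have : T.S y = [] := by rw [h, S_c, hcl]; simp
          exact T.S_ne_nil hx (by rw [hSeq, this])
        have hSy : T.S y = T.S (T.p y) := T.S_right hyc (by simp [hy])
        obtain ⟨t, ht⟩ := T.S_head (x := T.p y) (by simp [T.p_flip hyc, hy])
        obtain ⟨t', ht'⟩ := T.S_head hx
        have hkey : T.g x = T.g (T.p y) := by
          rw [ht', hSy, ht] at hSeq
          exact (List.cons_eq_cons.1 hSeq).1
        have hpyx : T.p y = x := (T.g_inj hkey).symm
        exact hpyx ▸ (T.hpar y hyc).1
      · -- |S y| < |S x|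
        have hSylt : (T.S y).length < (T.S x).length := by omega
        by_cases hipy : (T.P y).length ≤ i - (T.S y).length
        · -- P x = P y, so y is the parent of x
          have hPeq : T.P x = T.P y := by
            rw [hP', List.take_of_length_le hipy]
          have hxc : x ≠ T.c := by
            intro h
            have hcl : T.c.isLeft = true := by rw [← h, hx]
            have : T.P x = [] := by rw [h, P_c, hcl]; simp
            exact T.P_ne_nil (x := y) (by simp [hy]) (by rw [← hPeq, this])
          have hPx : T.P x = T.P (T.p x) := T.P_left hxc hx
          obtain ⟨t, ht⟩ := T.P_last (x := T.p x) (by simp [T.p_flip hxc, hx])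
          obtain ⟨t', ht'⟩ := T.P_last (x := y) (by simp [hy])
          have hkey : T.g (T.p x) = T.g y := by
            have h2 : t ++ [T.g (T.p x)] = t' ++ [T.g y] := by
              rw [← ht, ← ht', ← hPx, hPeq]
            have := congrArg List.getLast? h2
            simpa [List.getLast?_concat] using this
          have hpxy : T.p x = y := T.g_inj hkey
          exact T.hsymm _ _ (hpxy ▸ (T.hpar x hxc).1)
        · -- both proper : contradiction by counting
          exfalso
          push_neg at hipy
          have hPlen := congrArg List.length hP'
          simp [List.length_take] at hPlen
          have hPxlt : (T.P x).length < (T.P y).length := by omega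
          have cx := T.count_SP x
          have cy := T.count_SP y
          rw [hx] at cx
          rw [hy] at cy
          cases hcl : T.c.isLeft <;> rw [hcl] at cx cy <;> simp at cx cy <;> omega

lemma F_len (x : Vs ⊕ Vp) : (T.F x).length = T.d x + 1 := by
  have := T.len_SP x; simp [F]; omega

lemma F_left {x : Vs ⊕ Vp} (hx : x ≠ T.c) (hl : x.isLeft) :
    T.F x = T.g x :: T.F (T.p x) := by
  rw [F, F, S_left T hx hl, P_left T hx hl]; rfl

lemma F_right {x : Vs ⊕ Vp} (hx : x ≠ T.c) (hl : ¬ x.isLeft) :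
    T.F x = T.F (T.p x) ++ [T.g x] := by
  rw [F, F, S_right T hx hl, P_right T hx hl, List.append_assoc]

lemma mem_F (x : Vs ⊕ Vp) : ∀ a ∈ T.F x, ∃ z, a = T.g z := by
  intro a ha
  rcases List.mem_append.1 ha with h | h
  · obtain ⟨u, hu⟩ := T.mem_S x a h; exact ⟨Sum.inl u, hu⟩
  · obtain ⟨v, hv⟩ := T.mem_P x a h; exact ⟨Sum.inr v, hv⟩

lemma g_ne_one (z : Vs ⊕ Vp) : T.g z ≠ 1 := by simp [g]
lemma g_ne_two (z : Vs ⊕ Vp) : T.g z ≠ 2 := by simp [g]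

noncomputable def lsV (x : Vs ⊕ Vp) : List ℕ :=
  List.replicate (T.r - min (T.d x + 1) T.r) 1 ++ (T.F x).drop (T.d x + 1 - T.r)

noncomputable def lpV (x : Vs ⊕ Vp) : List ℕ :=
  (T.F x).take T.r ++ List.replicate (T.r - min (T.d x + 1) T.r) 2

lemma ls_len (x : Vs ⊕ Vp) : (T.lsV x).length = T.r := by
  have h := T.hr x
  simp [lsV, F_len]; omega

lemma lp_len (x : Vs ⊕ Vp) : (T.lpV x).length = T.r := by
  have h := T.hr x
  simp [lpV, F_len]; omega

lemma mem_ls (x : Vs ⊕ Vp) : ∀ a ∈ T.lsV x, a = 1 ∨ ∃ z, a = T.g z := by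
  intro a ha
  rcases List.mem_append.1 ha with h | h
  · exact Or.inl (List.eq_of_mem_replicate h)
  · exact Or.inr (T.mem_F x a (List.drop_subset _ _ h))

lemma mem_lp (x : Vs ⊕ Vp) : ∀ a ∈ T.lpV x, a = 2 ∨ ∃ z, a = T.g z := by
  intro a ha
  rcases List.mem_append.1 ha with h | h
  · exact Or.inr (T.mem_F x a (List.take_subset _ _ h))
  · exact Or.inl (List.eq_of_mem_replicate h)

lemma ls_drop (x : Vs ⊕ Vp) (i : ℕ) (hi1 : i ≤ T.d x + 1) (hir : i ≤ T.r) :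
    (T.lsV x).drop (T.r - i) = (T.F x).drop (T.d x + 1 - i) := by
  have hd := T.hr x
  rw [lsV, List.drop_append]
  have e2 : List.drop (T.r - i) (List.replicate (T.r - min (T.d x + 1) T.r) (1 : ℕ)) = [] := by
    apply List.drop_eq_nil_of_le; simp; omega
  have e1 : (T.r - i) - (List.replicate (T.r - min (T.d x + 1) T.r) (1 : ℕ)).length
      = min (T.d x + 1) T.r - i := by simp; omega
  rw [e1, e2, List.drop_drop, List.nil_append]
  congr 1
  omega

lemma lp_take (y : Vs ⊕ Vp) (i : ℕ) (hi1 : i ≤ T.d y + 1) (hir : i ≤ T.r) :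
    (T.lpV y).take i = (T.F y).take i := by
  have hd := T.hr y
  rw [lpV, List.take_append]
  have h0 : i - ((T.F y).take T.r).length = 0 := by
    simp [F_len]; omega
  rw [h0, List.take_zero, List.append_nil, List.take_take]
  congr 1
  omega

theorem overlap_iff (x y : Vs ⊕ Vp) (hx : x.isLeft = true) (hy : y.isLeft = false) :
    (∃ i, OverlapsBy (T.lsV x) (T.lpV y) i) ↔ T.Adj x y := by
  constructor
  · rintro ⟨i, hi1, hile, heq⟩
    rw [ls_len, lp_len, min_self] at hile
    rw [ls_len] at heq
    have hdx := T.hr x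
    have hdy := T.hr y
    -- i cannot exceed d y + 1
    have hiy : i ≤ T.d y + 1 := by
      by_contra hcon
      push_neg at hcon
      have h2mem : (2 : ℕ) ∈ (T.lpV y).take i := by
        rw [lpV, List.take_append]
        refine List.mem_append.2 (Or.inr ?_)
        rw [List.take_replicate]
        refine List.mem_replicate.2 ⟨?_, rfl⟩
        have : ((T.F y).take T.r).length = T.d y + 1 := by simp [F_len]; omega
        rw [this]
        omega
      rw [← heq] at h2mem
      rcases T.mem_ls x 2 (List.drop_subset _ _ h2mem) with h | ⟨z, hz⟩
      · omega
      · exact T.g_ne_two z hz.symm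
    have hix : i ≤ T.d x + 1 := by
      by_contra hcon
      push_neg at hcon
      have h1mem : (1 : ℕ) ∈ (T.lsV x).drop (T.r - i) := by
        rw [lsV, List.drop_append]
        refine List.mem_append.2 (Or.inl ?_)
        rw [List.drop_replicate]
        refine List.mem_replicate.2 ⟨?_, rfl⟩
        simp
        omega
      rw [heq] at h1mem
      rcases T.mem_lp y 1 (List.take_subset _ _ h1mem) with h | ⟨z, hz⟩
      · omega
      · exact T.g_ne_one z hz.symm
    rw [T.ls_drop x i hix hile, T.lp_take y i hiy hile] at heq
    exact T.main_adj x y hx hy i hi1 hix hiy heq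
  · intro hAdj
    have hdx := T.hr x
    have hdy := T.hr y
    rcases T.hstep x y hAdj with hd | hd
    · -- y is a child of x
      refine ⟨T.d y, by omega, ?_, ?_⟩
      · rw [ls_len, lp_len, min_self]; omega
      · rw [ls_len]
        have hyc : y ≠ T.c := by
          intro h; rw [h, (T.hd0 T.c).2 rfl] at hd; omega
        have hpy : T.p y = x := T.huniq x y hAdj hd
        rw [T.ls_drop x (T.d y) (by omega) (by omega),
            T.lp_take y (T.d y) (by omega) (by omega)]
        have hFy : T.F y = T.F x ++ [T.g y] := by
          rw [T.F_right hyc (by simp [hy]), hpy]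
        rw [hFy]
        have h0 : T.d x + 1 - T.d y = 0 := by omega
        rw [h0, List.drop_zero, List.take_append]
        have hfl : (T.F x).length = T.d y := by rw [F_len]; omega
        rw [List.take_of_length_le (by omega), hfl]
        simp
    · -- x is a child of y
      refine ⟨T.d x, by omega, ?_, ?_⟩
      · rw [ls_len, lp_len, min_self]; omega
      · rw [ls_len]
        have hxc : x ≠ T.c := by
          intro h; rw [h, (T.hd0 T.c).2 rfl] at hd; omega
        have hpx : T.p x = y := T.huniq y x (T.hsymm x y hAdj) hd
        rw [T.ls_drop x (T.d x) (by omega) (by omega),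
            T.lp_take y (T.d x) (by omega) (by omega)]
        have hFx : T.F x = T.g x :: T.F y := by
          rw [T.F_left hxc hx, hpx]
        rw [hFx]
        have h1 : T.d x + 1 - T.d x = 1 := by omega
        rw [h1]
        rw [List.take_of_length_le (by rw [F_len]; omega)]
        simp

end TreeData




section Graph
open SimpleGraph

variable {Vs Vp : Type*} (E : Vs → Vp → Prop)

lemma adj_flip {x y : Vs ⊕ Vp} (h : (underlyingGraph E).Adj x y) : x.isLeft = !y.isLeft := by
  rcases h with ⟨u, v, rfl, rfl, -⟩ | ⟨u, v, rfl, rfl, -⟩ <;> rfl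

lemma walk_parity {x y : Vs ⊕ Vp} (w : (underlyingGraph E).Walk x y) :
    Even w.length ↔ (x.isLeft = y.isLeft) := by
  induction w with
  | nil => simp
  | @cons a b c h q ih =>
    rw [Walk.length_cons, Nat.even_add_one, ih, adj_flip E h]
    cases b.isLeft <;> cases c.isLeft <;> simp

theorem statement18' {Vs Vp : Type*} [Fintype Vs] [Fintype Vp] (E : Vs → Vp → Prop)
    (hT : (underlyingGraph E).IsTree) :
    bReadability E ≤ graphRadius (underlyingGraph E) := by
  classical
  set G := underlyingGraph E with hG
  have hconn := hT.isConnected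
  obtain ⟨x0⟩ : Nonempty (Vs ⊕ Vp) := hconn.nonempty
  have hSne : {r | ∃ u, ∀ v, G.dist u v ≤ r}.Nonempty :=
    ⟨Finset.univ.sup (G.dist x0), x0, fun v => Finset.le_sup (Finset.mem_univ v)⟩
  have hmem := Nat.sInf_mem hSne
  set r : ℕ := sInf {r | ∃ u, ∀ v, G.dist u v ≤ r} with hrdef
  obtain ⟨c, hc⟩ : ∃ u, ∀ v, G.dist u v ≤ r := hmem
  have hradius : graphRadius G = r := rfl
  -- distance-zero characterization
  have hd0 : ∀ x : Vs ⊕ Vp, G.dist c x = 0 ↔ x = c := by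
    intro x
    rw [hconn.dist_eq_zero_iff]
    exact eq_comm
  -- parent existence
  have hpar_ex : ∀ x : Vs ⊕ Vp, x ≠ c → ∃ y, G.Adj y x ∧ G.dist c y + 1 = G.dist c x := by
    intro x hx
    obtain ⟨w, hw⟩ := (hconn.preconnected c x).exists_walk_length_eq_dist
    have hdx : 0 < G.dist c x := by
      rcases Nat.eq_zero_or_pos (G.dist c x) with h | h
      · exact absurd ((hd0 x).1 h) hx
      · exact h
    have hnn : ¬ (w.reverse).Nil := by
      rw [Walk.nil_iff_length_eq, Walk.length_reverse, hw]
      omega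
    obtain ⟨y, hadj, q, hq⟩ := Walk.not_nil_iff.1 hnn
    refine ⟨y, hadj.symm, ?_⟩
    have hql : q.length + 1 = G.dist c x := by
      have := congrArg Walk.length hq
      rw [Walk.length_reverse, hw, Walk.length_cons] at this
      omega
    have h1 : G.dist c y ≤ q.length := by
      have := SimpleGraph.dist_le q.reverse
      rwa [Walk.length_reverse] at this
    have h2 : G.dist c x ≤ G.dist c y + 1 := by
      obtain ⟨w2, hw2⟩ := (hconn.preconnected c y).exists_walk_length_eq_dist
      have := SimpleGraph.dist_le (w2.concat hadj.symm)
      rwa [Walk.length_concat, hw2] at this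
    omega
  have hpar_all : ∀ x : Vs ⊕ Vp, ∃ y, x ≠ c → G.Adj y x ∧ G.dist c y + 1 = G.dist c x := by
    intro x
    by_cases hx : x = c
    · exact ⟨c, fun h => absurd hx h⟩
    · obtain ⟨y, hy⟩ := hpar_ex x hx; exact ⟨y, fun _ => hy⟩
  choose p hp using hpar_all
  -- parity step
  have hstep : ∀ x y, G.Adj x y → G.dist c y = G.dist c x + 1 ∨ G.dist c x = G.dist c y + 1 := by
    intro x y hxy
    have h1 : G.dist c y ≤ G.dist c x + 1 := by
      obtain ⟨w, hw⟩ := (hconn.preconnected c x).exists_walk_length_eq_dist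
      have := SimpleGraph.dist_le (w.concat hxy)
      rwa [Walk.length_concat, hw] at this
    have h2 : G.dist c x ≤ G.dist c y + 1 := by
      obtain ⟨w, hw⟩ := (hconn.preconnected c y).exists_walk_length_eq_dist
      have := SimpleGraph.dist_le (w.concat hxy.symm)
      rwa [Walk.length_concat, hw] at this
    have h3 : G.dist c x ≠ G.dist c y := by
      intro heq
      obtain ⟨wx, hwx⟩ := (hconn.preconnected c x).exists_walk_length_eq_dist
      obtain ⟨wy, hwy⟩ := (hconn.preconnected c y).exists_walk_length_eq_dist
      have px := walk_parity E wx
      have py := walk_parity E wy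
      rw [hwx] at px
      rw [hwy] at py
      rw [heq] at px
      have hf := adj_flip E hxy
      rw [px] at py
      cases hxx : x.isLeft <;> cases hyy : y.isLeft <;> cases hcc : c.isLeft <;>
        simp [hxx, hyy, hcc] at py hf
    omega
  -- uniqueness of parents
  have huniq : ∀ x y, G.Adj x y → G.dist c y = G.dist c x + 1 → p y = x := by
    intro x y hxy hd
    have hyc : y ≠ c := by
      intro h
      rw [h, SimpleGraph.dist_self] at hd
      omega
    obtain ⟨hadj, hdp⟩ := hp y hyc
    obtain ⟨wx, hwx⟩ := (hconn.preconnected c x).exists_walk_length_eq_dist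
    obtain ⟨wz, hwz⟩ := (hconn.preconnected c (p y)).exists_walk_length_eq_dist
    have hnotmem : ∀ (a : Vs ⊕ Vp) (w : G.Walk c a), w.length < G.dist c y →
        y ∉ (w.toPath : G.Walk c a).support := by
      intro a w hlen hmem
      have hsub := Walk.support_toPath_subset w hmem
      rw [Walk.mem_support_iff_exists_append] at hsub
      obtain ⟨q1, q2, hq⟩ := hsub
      have h1 : G.dist c y ≤ q1.length := SimpleGraph.dist_le q1
      have h2 : q1.length + q2.length = w.length := by
        rw [hq] at hlen ⊢
        rw [Walk.length_append]
      omega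
    have hy1 : y ∉ (wx.toPath : G.Walk c x).support := by
      apply hnotmem x wx
      rw [hwx]; omega
    have hy2 : y ∉ (wz.toPath : G.Walk c (p y)).support := by
      apply hnotmem (p y) wz
      rw [hwz]; omega
    have hp1 : ((wx.toPath : G.Walk c x).concat hxy).IsPath := by
      rw [← Walk.isPath_reverse_iff, Walk.reverse_concat, Walk.cons_isPath_iff]
      refine ⟨(wx.toPath.2).reverse, ?_⟩
      rw [Walk.support_reverse, List.mem_reverse]
      exact hy1
    have hp2 : ((wz.toPath : G.Walk c (p y)).concat hadj).IsPath := by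
      rw [← Walk.isPath_reverse_iff, Walk.reverse_concat, Walk.cons_isPath_iff]
      refine ⟨(wz.toPath.2).reverse, ?_⟩
      rw [Walk.support_reverse, List.mem_reverse]
      exact hy2
    have hpatheq : (⟨_, hp1⟩ : G.Path c y) = (⟨_, hp2⟩ : G.Path c y) :=
      SimpleGraph.isAcyclic_iff_path_unique.1 hT.IsAcyclic _ _
    have hwalkeq := congrArg (fun pp : G.Path c y => (pp : G.Walk c y).reverse.getVert 1) hpatheq
    have hwalkeq2 : ((wx.toPath : G.Walk c x).concat hxy) = ((wz.toPath : G.Walk c (p y)).concat hadj) :=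
      congrArg Subtype.val hpatheq
    have h5 := congrArg (fun w : G.Walk c y => w.reverse.getVert 1) hwalkeq2
    simp only [Walk.reverse_concat, Walk.getVert_cons_succ, Walk.getVert_zero] at h5
    rw [← h5]
  -- encoder
  obtain ⟨encV, hencV⟩ := exists_injective_nat (Vs ⊕ Vp)
  -- assemble the TreeData
  let T : TreeData Vs Vp :=
    { Adj := G.Adj
      c := c
      p := p
      d := fun x => G.dist c x
      enc := encV
      r := r
      henc := hencV
      hd0 := hd0
      hpar := fun x hx => hp x hx
      hflip := fun x y h => adj_flip E h
      hsymm := fun x y h => h.symm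
      huniq := huniq
      hstep := hstep
      hr := hc }
  rw [hradius]
  apply Nat.sInf_le
  refine ⟨fun u => T.lsV (Sum.inl u), fun v => T.lpV (Sum.inr v),
    fun u => T.ls_len _, fun v => T.lp_len _, ?_⟩
  intro u v
  have hiff := T.overlap_iff (Sum.inl u) (Sum.inr v) rfl rfl
  constructor
  · intro h
    exact hiff.2 (Or.inl ⟨u, v, rfl, rfl, h⟩)
  · intro h
    have h2 : G.Adj (Sum.inl u) (Sum.inr v) := hiff.1 h
    rcases h2 with ⟨u', v', hu, hv, h'⟩ | ⟨u', v', hu, hv, h'⟩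
    · rw [Sum.inl.injEq] at hu
      rw [Sum.inr.injEq] at hv
      rwa [← hu, ← hv] at h'
    · exact absurd hu (by simp)

end Graph

/-- If the underlying undirected graph of the bipartite graph `T` is a tree,
then `r(T) ≤ radius(T)`. -/
theorem statement18 {Vs Vp : Type*} [Fintype Vs] [Fintype Vp] (E : Vs → Vp → Prop)
    (hT : (underlyingGraph E).IsTree) :
    bReadability E ≤ graphRadius (underlyingGraph E) := by
  exact statement18' E hT

end Readability
end
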